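/- arXiv:1501.06353 — 3 statements merged into one kernel-verified Lean document; each statement's English description precedes it below -/
import Mathlib

section
/- (Theorem B.1 of the paper, combinatorial form.) Suppose D contains at least one directed sub-block and every directed sub-block of D has at most n vertices, where n ≥ 3. Then for every x ∈ ℕ with x ≥ n − 2 and every W ⊆ V with |W| ≥ 3: W is x-generable if and only if W can be generated from a connected pair (by exact generation steps). -/
open Set

variable {V : Type*}

/-- One arc step within the induced subgraph on the vertex set `S`. -/
def StepIn (A : V → V → Prop) (S : Set V) (u v : V) : Prop :=
  u ∈ S ∧ v ∈ S ∧ A u v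

/-- `v` is reachable from `u` by a directed path in the induced subgraph on `S`
(every vertex is reachable from itself, provided it lies in `S`). -/
def ReachIn (A : V → V → Prop) (S : Set V) (u v : V) : Prop :=
  u ∈ S ∧ Relation.ReflTransGen (StepIn A S) u v

/-- `IN(X)`: the set of vertices from which some member of `X` is reachable,
computed in the induced subgraph on `S`. -/
def InSet (A : V → V → Prop) (S : Set V) (X : Set V) : Set V :=
  {u | ∃ x ∈ X, ReachIn A S u x}

/-- `Z` is dynamically partitioning with respect to `X` and `Y`:
`IN(X) ∩ IN(Y) = ∅` computed in the induced subgraph `D − Z`. -/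
def DynPart (A : V → V → Prop) (X Y Z : Set V) : Prop :=
  InSet A Zᶜ X ∩ InSet A Zᶜ Y = ∅

/-- `StepsLe r n u v`: `v` can be reached from `u` in at most `n` `r`-steps. -/
def StepsLe (r : V → V → Prop) : ℕ → V → V → Prop
  | 0, u, v => u = v
  | n + 1, u, v => u = v ∨ ∃ w, r u w ∧ StepsLe r n w v

/-- `v` is reachable from `u` by a directed path using at most `n` arcs
in the induced subgraph on `S`. -/
def ReachInLe (A : V → V → Prop) (S : Set V) (n : ℕ) (u v : V) : Prop :=
  u ∈ S ∧ StepsLe (StepIn A S) n u v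

/-- `IN_a(X)` computed in the induced subgraph on `S`. -/
def InSetLe (A : V → V → Prop) (S : Set V) (a : ℕ) (X : Set V) : Set V :=
  {u | ∃ x ∈ X, ReachInLe A S a u x}

/-- The vertex `i` is cycle-partitioning at order `x` with respect to `X` and `Y`:
`IN_a(X) ∩ IN_b(Y) = ∅` in `D − {i}` for all `a + b = x`. -/
def CyclePart (A : V → V → Prop) (X Y : Set V) (i : V) (x : ℕ) : Prop :=
  ∀ a b : ℕ, a + b = x → InSetLe A {i}ᶜ a X ∩ InSetLe A {i}ᶜ b Y = ∅

/-- One adjacency step of the underlying (simple) graph of `D[W]`. -/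
def UStep (A : V → V → Prop) (W : Set V) (u v : V) : Prop :=
  u ∈ W ∧ v ∈ W ∧ u ≠ v ∧ (A u v ∨ A v u)

/-- The underlying graph of `D[W]` is connected. -/
def UConnected (A : V → V → Prop) (W : Set V) : Prop :=
  W.Nonempty ∧ ∀ u ∈ W, ∀ v ∈ W, Relation.ReflTransGen (UStep A W) u v

/-- The underlying graph of `D[W]` is biconnected: at least 3 vertices, connected,
and deleting any single vertex leaves a connected graph. -/
def Biconnected (A : V → V → Prop) (W : Set V) : Prop :=
  3 ≤ W.ncard ∧ UConnected A W ∧ ∀ v ∈ W, UConnected A (W \ {v})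

/-- `D[W]` is a directed sub-block: some vertex of `W` is reachable in `D[W]` from
every other vertex of `W`, and the underlying graph of `D[W]` is biconnected. -/
def DirectedSubBlock (A : V → V → Prop) (W : Set V) : Prop :=
  (∃ i ∈ W, ∀ j ∈ W, ReachIn A W j i) ∧ Biconnected A W

/-- A directed sub-block is a transmission block iff it is maximal. -/
def TransmissionBlock (A : V → V → Prop) (W : Set V) : Prop :=
  DirectedSubBlock A W ∧ ∀ U : Set V, W ⊂ U → ¬ DirectedSubBlock A U

/-- A connected pair: a two-element set `{i, j}` with an arc between `i` and `j`. -/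
def ConnectedPair (A : V → V → Prop) (W : Set V) : Prop :=
  ∃ i j : V, i ≠ j ∧ W = {i, j} ∧ (A i j ∨ A j i)

/-- `W'` is obtained from `W` by one exact generation step. -/
def ExactStep (A : V → V → Prop) (W W' : Set V) : Prop :=
  ∃ k, k ∉ W ∧ W' = W ∪ {k} ∧ ∃ j ∈ W, A k j ∧ ¬ DynPart A {k} (W \ {j}) {j}

/-- `W` is the last term of a finite chain of exact generation steps whose
first term is a connected pair. -/
def GeneratedFromPair (A : V → V → Prop) (W : Set V) : Prop :=
  ∃ P : Set V, ConnectedPair A P ∧ Relation.ReflTransGen (ExactStep A) P W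

/-- `W'` is obtained from `W` by one order-`x` cycle generation step. -/
def CycleStep (A : V → V → Prop) (x : ℕ) (W W' : Set V) : Prop :=
  ∃ k, k ∉ W ∧ W' = W ∪ {k} ∧ ∃ j ∈ W, A k j ∧ ¬ CyclePart A {k} (W \ {j}) j x

/-- `W` is the last term of a finite chain of order-`x` cycle generation steps
whose first term is a connected pair. -/
def XGenerable (A : V → V → Prop) (x : ℕ) (W : Set V) : Prop :=
  ∃ P : Set V, ConnectedPair A P ∧ Relation.ReflTransGen (CycleStep A x) P W


def USym (A : V → V → Prop) (u v : V) : Prop := A u v ∨ A v u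

section Basic
variable {r : V → V → Prop}

lemma stepsLe_refl (n : ℕ) (u : V) : StepsLe r n u u := by
  cases n with
  | zero => rfl
  | succ n => exact Or.inl rfl

lemma stepsLe_succ {n : ℕ} {u v : V} (h : StepsLe r n u v) : StepsLe r (n+1) u v := by
  induction n generalizing u with
  | zero => exact Or.inl h
  | succ n ih =>
    rcases h with rfl | ⟨w, hw, hs⟩
    · exact Or.inl rfl
    · exact Or.inr ⟨w, hw, ih hs⟩

lemma stepsLe_mono {m n : ℕ} (h : m ≤ n) {u v : V} (hs : StepsLe r m u v) :
    StepsLe r n u v := by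
  induction n, h using Nat.le_induction with
  | base => exact hs
  | succ n _ ih => exact stepsLe_succ ih

lemma stepsLe_rtg {n : ℕ} {u v : V} (h : StepsLe r n u v) :
    Relation.ReflTransGen r u v := by
  induction n generalizing u with
  | zero => cases h; rfl
  | succ n ih =>
    rcases h with rfl | ⟨w, hw, hs⟩
    · rfl
    · exact Relation.ReflTransGen.head hw (ih hs)

lemma head?_append_cons (l₁ l₂ : List V) (a : V) :
    (l₁ ++ a :: l₂).head? = (l₁ ++ [a]).head? := by cases l₁ <;> simp

lemma getLast?_append_cons (l₁ l₂ : List V) (a : V) :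
    (l₁ ++ a :: l₂).getLast? = (a :: l₂).getLast? := by
  rw [List.getLast?_append]
  have h : (a :: l₂).getLast? = some ((a :: l₂).getLast (by simp)) :=
    List.getLast?_eq_getLast _
  rw [h]; rfl

/-- A nonempty chain list from a refl-trans-gen. -/
lemma rtg_list {u v : V} (h : Relation.ReflTransGen r u v) :
    ∃ l : List V, l ≠ [] ∧ l.Chain' r ∧ l.head? = some u ∧ l.getLast? = some v := by
  obtain ⟨l, hc, hl⟩ := List.exists_isChain_cons_of_relationReflTransGen h
  refine ⟨u :: l, by simp, hc, by simp, ?_⟩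
  rw [List.getLast?_eq_getLast (l := u :: l) (by simp), hl]

lemma not_nodup_split {l : List V} (h : ¬ l.Nodup) :
    ∃ (a : V) (l₁ l₂ l₃ : List V), l = (l₁ ++ a :: l₂) ++ a :: l₃ := by
  induction l with
  | nil => simp at h
  | cons b t ih =>
    by_cases hb : b ∈ t
    · obtain ⟨s, t', rfl⟩ := List.append_of_mem hb
      exact ⟨b, [], s, t', by simp⟩
    · have : ¬ t.Nodup := fun hn => h (List.nodup_cons.2 ⟨hb, hn⟩)
      obtain ⟨a, l₁, l₂, l₃, rfl⟩ := ih this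
      exact ⟨a, b :: l₁, l₂, l₃, by simp⟩

lemma chain_dedup_aux : ∀ (N : ℕ) (l : List V), l.length ≤ N → l.Chain' r → l ≠ [] →
    ∃ m : List V, m ≠ [] ∧ m.Chain' r ∧ m.Nodup ∧ m.head? = l.head? ∧
      m.getLast? = l.getLast? ∧ ∀ v ∈ m, v ∈ l := by
  intro N
  induction N with
  | zero => intro l hl _ hne; simp [List.length_eq_zero_iff.mp (Nat.le_zero.mp hl)] at hne
  | succ N ih =>
    intro l hl hc hne
    by_cases hnd : l.Nodup
    · exact ⟨l, hne, hc, hnd, rfl, rfl, fun v hv => hv⟩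
    · obtain ⟨a, l₁, l₂, l₃, rfl⟩ := not_nodup_split hnd
      have hc1 : (l₁ ++ a :: l₂).Chain' r := (List.isChain_append.mp hc).1
      have hc2 : (a :: l₃).Chain' r := (List.isChain_append.mp hc).2.1
      have hlink : ∀ x ∈ l₁.getLast?, ∀ y ∈ (a :: l₃).head?, r x y := by
        intro x hx y hy
        simp only [List.head?_cons, Option.mem_def, Option.some.injEq] at hy
        subst hy
        exact (List.isChain_append.mp hc1).2.2 x hx a (by simp)
      have hc' : (l₁ ++ a :: l₃).Chain' r :=
        List.isChain_append.mpr ⟨(List.isChain_append.mp hc1).1, hc2, hlink⟩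
      have hlen : (l₁ ++ a :: l₃).length ≤ N := by
        have := hl; simp only [List.length_append, List.length_cons] at this ⊢; omega
      obtain ⟨m, h1, h2, h3, h4, h5, h6⟩ := ih _ hlen hc' (by simp)
      refine ⟨m, h1, h2, h3, ?_, ?_, ?_⟩
      · rw [h4, head?_append_cons, List.append_assoc, head?_append_cons]
        cases l₁ <;> simp
      · rw [h5, getLast?_append_cons, List.append_assoc, List.getLast?_append,
          List.getLast?_append]
        have h : (a :: l₃).getLast? = some ((a :: l₃).getLast (by simp)) :=
          List.getLast?_eq_getLast _
        rw [h]; rfl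
      · intro v hv
        have := h6 v hv
        simp only [List.mem_append, List.mem_cons] at this ⊢
        tauto

lemma chain_dedup {l : List V} (hc : l.Chain' r) (hne : l ≠ []) :
    ∃ m : List V, m ≠ [] ∧ m.Chain' r ∧ m.Nodup ∧ m.head? = l.head? ∧
      m.getLast? = l.getLast? ∧ ∀ v ∈ m, v ∈ l :=
  chain_dedup_aux l.length l le_rfl hc hne

lemma split_first {P : V → Prop} : ∀ (l : List V), (∃ v ∈ l, P v) →
    ∃ (l₁ : List V) (a : V) (l₂ : List V), l = l₁ ++ a :: l₂ ∧ P a ∧ ∀ b ∈ l₁, ¬ P b := by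
  intro l
  induction l with
  | nil => rintro ⟨v, hv, -⟩; simp at hv
  | cons b t ih =>
    intro h
    by_cases hb : P b
    · exact ⟨[], b, t, by simp, hb, by simp⟩
    · have : ∃ v ∈ t, P v := by
        obtain ⟨v, hv, hPv⟩ := h
        rcases List.mem_cons.mp hv with rfl | hv'
        · exact absurd hPv hb
        · exact ⟨v, hv', hPv⟩
      obtain ⟨l₁, a, l₂, rfl, hPa, hl₁⟩ := ih this
      refine ⟨b :: l₁, a, l₂, by simp, hPa, ?_⟩
      intro c hc
      rcases List.mem_cons.mp hc with rfl | hc'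
      · exact hb
      · exact hl₁ c hc'

lemma split_last {P : V → Prop} : ∀ (l : List V), (∃ v ∈ l, P v) →
    ∃ (l₁ : List V) (a : V) (l₂ : List V), l = l₁ ++ a :: l₂ ∧ P a ∧ ∀ b ∈ l₂, ¬ P b := by
  intro l
  induction l with
  | nil => rintro ⟨v, hv, -⟩; simp at hv
  | cons b t ih =>
    intro h
    by_cases ht : ∃ v ∈ t, P v
    · obtain ⟨l₁, a, l₂, rfl, hPa, hl₂⟩ := ih ht
      exact ⟨b :: l₁, a, l₂, by simp, hPa, hl₂⟩
    · have hb : P b := by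
        obtain ⟨v, hv, hPv⟩ := h
        rcases List.mem_cons.mp hv with rfl | hv'
        · exact hPv
        · exact absurd ⟨v, hv', hPv⟩ ht
      exact ⟨[], b, t, by simp, hb, fun c hc hPc => ht ⟨c, hc, hPc⟩⟩

end Basic

section Conn
variable {A : V → V → Prop} {B : Set V}



lemma ustep_symm : Symmetric (UStep A B) :=
  fun _ _ ⟨h1, h2, h3, h4⟩ => ⟨h2, h1, h3.symm, h4.symm⟩

lemma head?_append_left {l l' : List V} (h : l ≠ []) : (l ++ l').head? = l.head? := by
  cases l with
  | nil => exact absurd rfl h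
  | cons a t => simp

lemma getLast?_cons_ne {l : List V} (a : V) (h : l ≠ []) : (a :: l).getLast? = l.getLast? := by
  cases l with
  | nil => exact absurd rfl h
  | cons b t => exact List.getLast?_cons_cons

/-- members of a `StepIn`-chain whose head is in `S` all lie in `S`. -/
lemma chain_mem : ∀ (l : List V), l.Chain' (StepIn A B) →
    (∀ h, l.head? = some h → h ∈ B) → ∀ v ∈ l, v ∈ B := by
  intro l
  induction l with
  | nil => intro _ _ v hv; simp at hv
  | cons a t ih =>
    intro hc hh v hv
    rcases List.mem_cons.mp hv with rfl | hv'
    · exact hh v rfl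
    · cases t with
      | nil => simp at hv'
      | cons b t' =>
        have hab : StepIn A B a b := (List.isChain_cons_cons.mp hc).1
        exact ih (List.isChain_cons_cons.mp hc).2 (fun h hh' => by
          simp only [List.head?_cons, Option.some.injEq] at hh'; subst hh'; exact hab.2.1)
          v hv'

lemma chain_stepIn : ∀ (l : List V), l.Chain' A → (∀ v ∈ l, v ∈ B) →
    l.Chain' (StepIn A B) := by
  intro l
  induction l with
  | nil => intro _ _; exact List.isChain_nil
  | cons a t ih =>
    intro hc hm
    cases t with
    | nil => exact List.isChain_singleton a
    | cons b t' =>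
      refine List.isChain_cons_cons.mpr ⟨⟨hm a (by simp), hm b (by simp), (List.isChain_cons_cons.mp hc).1⟩, ?_⟩
      exact ih (List.isChain_cons_cons.mp hc).2 (fun v hv => hm v (List.mem_cons_of_mem a hv))

lemma chain_ustep : ∀ (l : List V), l.Chain' (USym A) → l.Nodup → (∀ v ∈ l, v ∈ B) →
    l.Chain' (UStep A B) := by
  intro l
  induction l with
  | nil => intro _ _ _; exact List.isChain_nil
  | cons a t ih =>
    intro hc hnd hm
    cases t with
    | nil => exact List.isChain_singleton a
    | cons b t' =>
      refine List.isChain_cons_cons.mpr ⟨⟨hm a (by simp), hm b (by simp), ?_, (List.isChain_cons_cons.mp hc).1⟩, ?_⟩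
      · intro h; subst h; exact (List.nodup_cons.mp hnd).1 (by simp)
      · exact ih (List.isChain_cons_cons.mp hc).2 (List.nodup_cons.mp hnd).2
          (fun v hv => hm v (List.mem_cons_of_mem a hv))

lemma reach_getLast {r : V → V → Prop} : ∀ (l : List V), l.Chain' r →
    ∀ q, l.getLast? = some q → ∀ v ∈ l, Relation.ReflTransGen r v q := by
  intro l
  induction l with
  | nil => intro _ q hq; simp at hq
  | cons a t ih =>
    intro hc q hq v hv
    cases t with
    | nil =>
      simp only [List.getLast?_singleton, Option.some.injEq] at hq
      subst hq
      rcases List.mem_cons.mp hv with rfl | hv'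
      · rfl
      · simp at hv'
    | cons b t' =>
      rw [List.getLast?_cons_cons] at hq
      rcases List.mem_cons.mp hv with rfl | hv'
      · exact Relation.ReflTransGen.head (List.isChain_cons_cons.mp hc).1
          (ih (List.isChain_cons_cons.mp hc).2 q hq b (by simp))
      · exact ih (List.isChain_cons_cons.mp hc).2 q hq v hv'

/-- all members of a USym chain are mutually connected in any superset. -/
lemma piece_conn (l : List V) (hc : l.Chain' (USym A)) (hnd : l.Nodup)
    (hm : ∀ v ∈ l, v ∈ B) : ∀ u ∈ l, ∀ v ∈ l, Relation.ReflTransGen (UStep A B) u v := by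
  intro u hu v hv
  have hch := chain_ustep (B := B) l hc hnd hm
  cases hq : l.getLast? with
  | none => rw [List.getLast?_eq_none_iff] at hq; subst hq; simp at hu
  | some q =>
    have h1 := reach_getLast l hch q hq u hu
    have h2 := reach_getLast l hch q hq v hv
    exact h1.trans ((@Relation.ReflTransGen.stdSymm _ _ ⟨fun _ _ h => ustep_symm h⟩).symm _ _ h2)

lemma reach_in_last (l : List V) (hc : l.Chain' A) (hm : ∀ v ∈ l, v ∈ B)
    {t : V} (ht : l.getLast? = some t) : ∀ v ∈ l, ReachIn A B v t := by
  intro v hv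
  exact ⟨hm v hv, reach_getLast l (chain_stepIn l hc hm) t ht v hv⟩


lemma conn_via_anchor {B' : Set V} {c : V} (hc : c ∈ B')
    (hall : ∀ u ∈ B', Relation.ReflTransGen (UStep A B') u c) : UConnected A B' :=
  ⟨⟨c, hc⟩, fun u hu v hv =>
    (hall u hu).trans ((@Relation.ReflTransGen.stdSymm _ _ ⟨fun _ _ h => ustep_symm h⟩).symm _ _ (hall v hv))⟩

end Conn

section Theta
variable {A : V → V → Prop}

lemma theta_del (A : V → V → Prop) (L1 L2 : List V) (p q : V) (B : Set V)
    (hB : ∀ v, v ∈ B ↔ (v ∈ L1 ∨ v ∈ L2))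
    (h1 : L1.Chain' (USym A)) (h2 : L2.Chain' (USym A))
    (hh1 : L1.head? = some p) (hh2 : L2.head? = some p)
    (hl1 : L1.getLast? = some q) (hl2 : L2.getLast? = some q)
    (hnd1 : L1.Nodup) (hnd2 : L2.Nodup)
    (hpq : p ≠ q)
    (hint : ∀ v, v ∈ L1 → v ∈ L2 → v = p ∨ v = q)
    (v₀ : V) (hv₀ : v₀ ∈ L1) : UConnected A (B \ {v₀}) := by
  obtain ⟨m₁, m₂, heq⟩ := List.append_of_mem hv₀
  have hnd := heq ▸ hnd1
  have hm₁nd : m₁.Nodup := (List.nodup_append'.mp hnd).1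
  have hm₂nd : m₂.Nodup := (List.nodup_cons.mp (List.nodup_append'.mp hnd).2.1).2
  have hv₀m₂ : v₀ ∉ m₂ := (List.nodup_cons.mp (List.nodup_append'.mp hnd).2.1).1
  have hv₀m₁ : v₀ ∉ m₁ := fun h => (List.nodup_append'.mp hnd).2.2 h (by simp)
  have hc := heq ▸ h1
  have hm₁c : m₁.Chain' (USym A) := (List.isChain_append.mp hc).1
  have hm₂c : m₂.Chain' (USym A) := (List.isChain_append.mp hc).2.1.tail
  have pmem2 : p ∈ L2 := List.mem_of_mem_head? hh2
  have qmem2 : q ∈ L2 := List.mem_of_mem_getLast? hl2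
  have hm₁B : ∀ v ∈ m₁, v ∈ B := fun v hv => (hB v).mpr (Or.inl (heq ▸ (by simp [hv])))
  have hm₂B : ∀ v ∈ m₂, v ∈ B := fun v hv => (hB v).mpr (Or.inl (heq ▸ (by simp [hv])))
  have hL2B : ∀ v ∈ L2, v ∈ B := fun v hv => (hB v).mpr (Or.inr hv)
  by_cases hv₀2 : v₀ ∈ L2
  · rcases hint v₀ hv₀ hv₀2 with rfl | rfl
    · -- v₀ = p
      have hm₁nil : m₁ = [] := by
        cases m₁ with
        | nil => rfl
        | cons a t =>
          exfalso
          rw [heq] at hh1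
          simp only [List.cons_append, List.head?_cons, Option.some.injEq] at hh1
          exact hv₀m₁ (by simp [hh1])
      subst hm₁nil
      simp only [List.nil_append] at heq
      obtain ⟨t₁, t₂, heq2⟩ := List.append_of_mem hv₀2
      have hnd2' := heq2 ▸ hnd2
      have ht₂nd : t₂.Nodup := (List.nodup_cons.mp (List.nodup_append'.mp hnd2').2.1).2
      have hv₀t₂ : v₀ ∉ t₂ := (List.nodup_cons.mp (List.nodup_append'.mp hnd2').2.1).1
      have hv₀t₁ : v₀ ∉ t₁ := fun h => (List.nodup_append'.mp hnd2').2.2 h (by simp)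
      have ht₁nil : t₁ = [] := by
        cases t₁ with
        | nil => rfl
        | cons a t =>
          exfalso
          rw [heq2] at hh2
          simp only [List.cons_append, List.head?_cons, Option.some.injEq] at hh2
          exact hv₀t₁ (by simp [hh2])
      subst ht₁nil
      simp only [List.nil_append] at heq2
      have hm₂ne : m₂ ≠ [] := by
        intro h; rw [heq, h] at hl1; simp at hl1; exact hpq hl1
      have ht₂ne : t₂ ≠ [] := by
        intro h; rw [heq2, h] at hl2; simp at hl2; exact hpq hl2
      have hm₂l : m₂.getLast? = some q := by
        rw [heq, getLast?_cons_ne _ hm₂ne] at hl1; exact hl1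
      have ht₂l : t₂.getLast? = some q := by
        rw [heq2, getLast?_cons_ne _ ht₂ne] at hl2; exact hl2
      have ht₂c : t₂.Chain' (USym A) := (heq2 ▸ h2).tail
      have hm₂c' : m₂.Chain' (USym A) := (heq ▸ h1).tail
      have hm₂B' : ∀ v ∈ m₂, v ∈ B \ {v₀} := fun v hv =>
        ⟨hm₂B v hv, fun h => hv₀m₂ ((Set.mem_singleton_iff.mp h) ▸ hv)⟩
      have ht₂B' : ∀ v ∈ t₂, v ∈ B \ {v₀} := fun v hv =>
        ⟨hL2B v (heq2 ▸ (by simp [hv])), fun h => hv₀t₂ ((Set.mem_singleton_iff.mp h) ▸ hv)⟩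
      have qmem : q ∈ m₂ := List.mem_of_mem_getLast? hm₂l
      have qmem' : q ∈ t₂ := List.mem_of_mem_getLast? ht₂l
      refine conn_via_anchor (hm₂B' q qmem) ?_
      intro u hu
      rcases (hB u).mp hu.1 with hu1 | hu2
      · have : u ∈ m₂ := by
          rw [heq] at hu1
          rcases List.mem_cons.mp hu1 with rfl | h
          · exact absurd rfl hu.2
          · exact h
        exact piece_conn m₂ hm₂c' hm₂nd hm₂B' u this q qmem
      · have : u ∈ t₂ := by
          rw [heq2] at hu2
          rcases List.mem_cons.mp hu2 with rfl | h
          · exact absurd rfl hu.2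
          · exact h
        exact piece_conn t₂ ht₂c ht₂nd ht₂B' u this q qmem'
    · -- v₀ = q
      have hm₂nil : m₂ = [] := by
        cases m₂ with
        | nil => rfl
        | cons a t =>
          exfalso
          have : L1.getLast? = (v₀ :: a :: t).getLast? := by rw [heq, getLast?_append_cons]
          rw [hl1, List.getLast?_cons_cons] at this
          exact hv₀m₂ (List.mem_of_mem_getLast? this.symm)
      subst hm₂nil
      obtain ⟨t₁, t₂, heq2⟩ := List.append_of_mem hv₀2
      have hnd2' := heq2 ▸ hnd2
      have ht₁nd : t₁.Nodup := (List.nodup_append'.mp hnd2').1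
      have hv₀t₂ : v₀ ∉ t₂ := (List.nodup_cons.mp (List.nodup_append'.mp hnd2').2.1).1
      have hv₀t₁ : v₀ ∉ t₁ := fun h => (List.nodup_append'.mp hnd2').2.2 h (by simp)
      have ht₂nil : t₂ = [] := by
        cases t₂ with
        | nil => rfl
        | cons a t =>
          exfalso
          have : L2.getLast? = (v₀ :: a :: t).getLast? := by rw [heq2, getLast?_append_cons]
          rw [hl2, List.getLast?_cons_cons] at this
          exact hv₀t₂ (List.mem_of_mem_getLast? this.symm)
      subst ht₂nil
      have hm₁ne : m₁ ≠ [] := by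
        intro h; rw [heq, h] at hh1; simp at hh1; exact hpq hh1.symm
      have ht₁ne : t₁ ≠ [] := by
        intro h; rw [heq2, h] at hh2; simp at hh2; exact hpq hh2.symm
      have hm₁h : m₁.head? = some p := by
        rw [heq, head?_append_left hm₁ne] at hh1; exact hh1
      have ht₁h : t₁.head? = some p := by
        rw [heq2, head?_append_left ht₁ne] at hh2; exact hh2
      have ht₁c : t₁.Chain' (USym A) := (List.isChain_append.mp (heq2 ▸ h2)).1
      have hm₁B' : ∀ v ∈ m₁, v ∈ B \ {v₀} := fun v hv =>
        ⟨hm₁B v hv, fun h => hv₀m₁ ((Set.mem_singleton_iff.mp h) ▸ hv)⟩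
      have ht₁B' : ∀ v ∈ t₁, v ∈ B \ {v₀} := fun v hv =>
        ⟨hL2B v (heq2 ▸ (by simp [hv])), fun h => hv₀t₁ ((Set.mem_singleton_iff.mp h) ▸ hv)⟩
      have pmem : p ∈ m₁ := List.mem_of_mem_head? hm₁h
      have pmem' : p ∈ t₁ := List.mem_of_mem_head? ht₁h
      refine conn_via_anchor (hm₁B' p pmem) ?_
      intro u hu
      rcases (hB u).mp hu.1 with hu1 | hu2
      · have : u ∈ m₁ := by
          rw [heq] at hu1
          rcases List.mem_append.mp hu1 with h | h
          · exact h
          · exact absurd (List.mem_singleton.mp h) hu.2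
        exact piece_conn m₁ (List.isChain_append.mp (heq ▸ h1)).1 hm₁nd hm₁B' u this p pmem
      · have : u ∈ t₁ := by
          rw [heq2] at hu2
          rcases List.mem_append.mp hu2 with h | h
          · exact h
          · exact absurd (List.mem_singleton.mp h) hu.2
        exact piece_conn t₁ ht₁c ht₁nd ht₁B' u this p pmem'
  · -- v₀ ∉ L2 : v₀ is internal to L1
    have hv₀p : v₀ ≠ p := fun h => hv₀2 (h ▸ pmem2)
    have hv₀q : v₀ ≠ q := fun h => hv₀2 (h ▸ qmem2)
    have hm₁ne : m₁ ≠ [] := by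
      intro h; rw [heq, h] at hh1; simp at hh1; exact hv₀p hh1
    have hm₂ne : m₂ ≠ [] := by
      intro h
      rw [heq, h, getLast?_append_cons] at hl1; simp at hl1; exact hv₀q hl1
    have hm₁h : m₁.head? = some p := by
      rw [heq, head?_append_left hm₁ne] at hh1; exact hh1
    have hm₂l : m₂.getLast? = some q := by
      rw [heq, getLast?_append_cons, getLast?_cons_ne _ hm₂ne] at hl1; exact hl1
    have hm₁B' : ∀ v ∈ m₁, v ∈ B \ {v₀} := fun v hv =>
      ⟨hm₁B v hv, fun h => hv₀m₁ ((Set.mem_singleton_iff.mp h) ▸ hv)⟩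
    have hm₂B' : ∀ v ∈ m₂, v ∈ B \ {v₀} := fun v hv =>
      ⟨hm₂B v hv, fun h => hv₀m₂ ((Set.mem_singleton_iff.mp h) ▸ hv)⟩
    have hL2B' : ∀ v ∈ L2, v ∈ B \ {v₀} := fun v hv =>
      ⟨hL2B v hv, fun h => hv₀2 ((Set.mem_singleton_iff.mp h) ▸ hv)⟩
    have pmem : p ∈ m₁ := List.mem_of_mem_head? hm₁h
    have qmem : q ∈ m₂ := List.mem_of_mem_getLast? hm₂l
    refine conn_via_anchor (hL2B' p pmem2) ?_
    intro u hu
    rcases (hB u).mp hu.1 with hu1 | hu2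
    · rw [heq] at hu1
      rcases List.mem_append.mp hu1 with h | h
      · exact piece_conn m₁ hm₁c hm₁nd hm₁B' u h p pmem
      · rcases List.mem_cons.mp h with rfl | h'
        · exact absurd rfl hu.2
        · exact (piece_conn m₂ hm₂c hm₂nd hm₂B' u h' q qmem).trans
            (piece_conn L2 h2 hnd2 hL2B' q qmem2 p pmem2)
    · exact piece_conn L2 h2 hnd2 hL2B' u hu2 p pmem2
end Theta

section Theta2
variable {A : V → V → Prop}

lemma theta_block (A : V → V → Prop) (L1 L2 : List V) (p q : V) (B : Set V)
    (hB : ∀ v, v ∈ B ↔ (v ∈ L1 ∨ v ∈ L2))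
    (h1 : L1.Chain' (USym A)) (h2 : L2.Chain' (USym A))
    (hh1 : L1.head? = some p) (hh2 : L2.head? = some p)
    (hl1 : L1.getLast? = some q) (hl2 : L2.getLast? = some q)
    (hnd1 : L1.Nodup) (hnd2 : L2.Nodup)
    (hpq : p ≠ q)
    (hint : ∀ v, v ∈ L1 → v ∈ L2 → v = p ∨ v = q)
    (hthree : 3 ≤ B.ncard)
    (hsink : ∃ t ∈ B, ∀ v ∈ B, ReachIn A B v t) :
    DirectedSubBlock A B := by
  have pmem1 : p ∈ L1 := List.mem_of_mem_head? hh1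
  have pmem2 : p ∈ L2 := List.mem_of_mem_head? hh2
  have conn : UConnected A B := by
    refine conn_via_anchor ((hB p).mpr (Or.inl pmem1)) ?_
    intro u hu
    rcases (hB u).mp hu with h | h
    · exact piece_conn L1 h1 hnd1 (fun v hv => (hB v).mpr (Or.inl hv)) u h p pmem1
    · exact piece_conn L2 h2 hnd2 (fun v hv => (hB v).mpr (Or.inr hv)) u h p pmem2
  refine ⟨hsink, hthree, conn, ?_⟩
  intro v₀ hv₀
  rcases (hB v₀).mp hv₀ with h | h
  · exact theta_del A L1 L2 p q B hB h1 h2 hh1 hh2 hl1 hl2 hnd1 hnd2 hpq hint v₀ h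
  · exact theta_del A L2 L1 p q B (fun v => (hB v).trans or_comm) h2 h1 hh2 hh1 hl2 hl1
      hnd2 hnd1 hpq (fun v a b => hint v b a) v₀ h

lemma three_le_ncard [Fintype V] {B : Set V} {a b c : V}
    (ha : a ∈ B) (hb : b ∈ B) (hc : c ∈ B)
    (hab : a ≠ b) (hac : a ≠ c) (hbc : b ≠ c) : 3 ≤ B.ncard := by
  have h3 : ({a, b, c} : Set V).ncard = 3 :=
    Set.ncard_eq_three.mpr ⟨a, b, c, hab, hac, hbc, rfl⟩
  rw [← h3]
  exact Set.ncard_le_ncard (by intro v hv; rcases hv with rfl | rfl | rfl <;> assumption)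
    B.toFinite

lemma count_bound [Fintype V] {ρ1 ρ2 : List V} {B : Set V} {j u' : V}
    (hnd1 : ρ1.Nodup) (hnd2 : ρ2.Nodup)
    (hsub : ∀ v, (v ∈ ρ1 ∨ v ∈ ρ2) → v ∈ B ∧ v ≠ j)
    (hj : j ∈ B)
    (hint : ∀ v, v ∈ ρ1 → v ∈ ρ2 → v = u') (hu1 : u' ∈ ρ1) (hu2 : u' ∈ ρ2) :
    ρ1.length + ρ2.length ≤ B.ncard := by
  classical
  have hcard1 : ρ1.toFinset.card = ρ1.length := List.toFinset_card_of_nodup hnd1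
  have hcard2 : ρ2.toFinset.card = ρ2.length := List.toFinset_card_of_nodup hnd2
  have hinter : ρ1.toFinset ∩ ρ2.toFinset = {u'} := by
    ext v
    simp only [Finset.mem_inter, List.mem_toFinset, Finset.mem_singleton]
    constructor
    · rintro ⟨h1, h2⟩; exact hint v h1 h2
    · rintro rfl; exact ⟨hu1, hu2⟩
  have hcu : (ρ1.toFinset ∪ ρ2.toFinset).card + 1 = ρ1.length + ρ2.length := by
    have := Finset.card_union_add_card_inter ρ1.toFinset ρ2.toFinset
    rw [hinter, hcard1, hcard2] at this
    simpa using this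
  have hsubset : ↑(ρ1.toFinset ∪ ρ2.toFinset) ⊆ B \ {j} := by
    intro v hv
    simp only [Finset.coe_union, Set.mem_union, List.coe_toFinset, Set.mem_setOf_eq] at hv
    obtain ⟨h1, h2⟩ := hsub v hv
    exact ⟨h1, h2⟩
  have hle : (ρ1.toFinset ∪ ρ2.toFinset).card ≤ (B \ {j}).ncard := by
    rw [← Set.ncard_coe_finset]
    exact Set.ncard_le_ncard hsubset (B \ {j}).toFinite
  have hdiff : (B \ {j}).ncard = B.ncard - 1 := Set.ncard_diff_singleton_of_mem hj
  have hpos : 0 < B.ncard := (Set.ncard_pos B.toFinite).mpr ⟨j, hj⟩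
  omega

lemma chain_stepsLe {r : V → V → Prop} : ∀ (l : List V), l.Chain' r →
    ∀ u v, l.head? = some u → l.getLast? = some v → StepsLe r (l.length - 1) u v := by
  intro l
  induction l with
  | nil => intro _ u v h; simp at h
  | cons a t ih =>
    intro hc u v hu hv
    simp only [List.head?_cons, Option.some.injEq] at hu
    subst hu
    cases t with
    | nil =>
      simp only [List.getLast?_singleton, Option.some.injEq] at hv
      subst hv; exact stepsLe_refl 0 a
    | cons b t' =>
      rw [List.getLast?_cons_cons] at hv
      have hlen : (a :: b :: t').length - 1 = ((b :: t').length - 1) + 1 := by simp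
      rw [hlen]
      exact Or.inr ⟨b, (List.isChain_cons_cons.mp hc).1,
        ih (List.isChain_cons_cons.mp hc).2 b v rfl hv⟩
end Theta2

section Blocks
variable {A : V → V → Prop}

lemma getLast?_append_right {l l' : List V} (h : l' ≠ []) :
    (l ++ l').getLast? = l'.getLast? := by
  rw [List.getLast?_append, List.getLast?_eq_getLast (l := l') h]; rfl

lemma usym_of_chainA {l : List V} (h : l.Chain' A) : l.Chain' (USym A) :=
  h.imp (fun _ _ hab => Or.inl hab)

lemma usym_rev {l : List V} (h : l.Chain' (USym A)) : l.reverse.Chain' (USym A) :=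
  List.isChain_reverse.mpr (h.imp (fun _ _ hab => hab.symm))

lemma sink_two (A : V → V → Prop) (B : Set V) (L1 L2 : List V) (q0 : V)
    (hB : ∀ v, v ∈ B ↔ (v ∈ L1 ∨ v ∈ L2))
    (c1 : L1.Chain' A) (c2 : L2.Chain' A)
    (l1 : L1.getLast? = some q0) (l2 : L2.getLast? = some q0) :
    ∃ t ∈ B, ∀ v ∈ B, ReachIn A B v t := by
  have h1 := reach_in_last L1 c1 (fun v hv => (hB v).mpr (Or.inl hv)) l1
  have h2 := reach_in_last L2 c2 (fun v hv => (hB v).mpr (Or.inr hv)) l2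
  refine ⟨q0, (hB q0).mpr (Or.inl (List.mem_of_mem_getLast? l1)), fun v hv => ?_⟩
  rcases (hB v).mp hv with h | h
  · exact h1 v h
  · exact h2 v h

/-- two internally disjoint directed paths from `p` to `q` form a directed sub-block -/
lemma dtheta_block [Fintype V] (A : V → V → Prop) (L1 L2 : List V) (p q : V) (B : Set V)
    (hB : ∀ v, v ∈ B ↔ (v ∈ L1 ∨ v ∈ L2))
    (c1 : L1.Chain' A) (c2 : L2.Chain' A)
    (hh1 : L1.head? = some p) (hh2 : L2.head? = some p)
    (hl1 : L1.getLast? = some q) (hl2 : L2.getLast? = some q)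
    (hnd1 : L1.Nodup) (hnd2 : L2.Nodup)
    (hpq : p ≠ q)
    (hint : ∀ v, v ∈ L1 → v ∈ L2 → v = p ∨ v = q)
    {a b c : V} (ha : a ∈ B) (hb : b ∈ B) (hc : c ∈ B)
    (hab : a ≠ b) (hac : a ≠ c) (hbc : b ≠ c) :
    DirectedSubBlock A B :=
  theta_block A L1 L2 p q B hB (usym_of_chainA c1) (usym_of_chainA c2) hh1 hh2 hl1 hl2
    hnd1 hnd2 hpq hint (three_le_ncard ha hb hc hab hac hbc)
    (sink_two A B L1 L2 q hB c1 c2 hl1 hl2)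

/-- a directed cycle `q0 → ... → k → j → ... → q0` is a directed sub-block -/
lemma cycle_block [Fintype V] (A : V → V → Prop) (ρ J' : List V) (q0 j k : V) (B : Set V)
    (hB : ∀ v, v ∈ B ↔ (v ∈ ρ ∨ v ∈ J'))
    (cρ : ρ.Chain' A) (cJ : J'.Chain' A)
    (hρh : ρ.head? = some q0) (hρl : ρ.getLast? = some k)
    (hJh : J'.head? = some j) (hJl : J'.getLast? = some q0)
    (hndρ : ρ.Nodup) (hndJ : J'.Nodup)
    (hkj : A k j)
    (hq0j : q0 ≠ j) (hq0k : q0 ≠ k) (hkjne : k ≠ j)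
    (hjρ : j ∉ ρ)
    (hint : ∀ v, v ∈ ρ → v ∈ J' → v = q0) :
    DirectedSubBlock A B := by
  have hρne : ρ ≠ [] := fun h => by simp [h] at hρh
  have hJne : J' ≠ [] := fun h => by simp [h] at hJh
  have hjJ : j ∈ J' := List.mem_of_mem_head? hJh
  have hq0ρ : q0 ∈ ρ := List.mem_of_mem_head? hρh
  have hkρ : k ∈ ρ := List.mem_of_mem_getLast? hρl
  have hB' : ∀ v, v ∈ B ↔ (v ∈ ρ ++ [j] ∨ v ∈ J'.reverse) := by
    intro v
    rw [hB v]
    simp only [List.mem_append, List.mem_singleton, List.mem_reverse]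
    constructor
    · rintro (h | h)
      · exact Or.inl (Or.inl h)
      · exact Or.inr h
    · rintro ((h | rfl) | h)
      · exact Or.inl h
      · exact Or.inr hjJ
      · exact Or.inr h
  have hc1 : (ρ ++ [j]).Chain' (USym A) := by
    refine usym_of_chainA (List.isChain_append.mpr ⟨cρ, by simp, ?_⟩)
    intro x hx y hy
    rw [hρl] at hx
    simp only [Option.mem_def, Option.some.injEq] at hx
    simp only [List.head?_cons, Option.mem_def, Option.some.injEq] at hy
    subst hx; subst hy; exact hkj
  have hM : (ρ ++ J').Chain' A := by
    refine List.isChain_append.mpr ⟨cρ, cJ, ?_⟩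
    intro x hx y hy
    rw [hρl] at hx
    rw [hJh] at hy
    simp only [Option.mem_def, Option.some.injEq] at hx hy
    subst hx; subst hy; exact hkj
  refine theta_block A (ρ ++ [j]) J'.reverse q0 j B hB' hc1 (usym_rev (usym_of_chainA cJ))
    (by rw [head?_append_left hρne]; exact hρh)
    (by rw [List.head?_reverse]; exact hJl)
    (by rw [getLast?_append_right (by simp : ([j] : List V) ≠ [])]; rfl)
    (by rw [List.getLast?_reverse]; exact hJh)
    (List.nodup_append'.mpr ⟨hndρ, by simp, by
      intro v hv h
      simp only [List.mem_singleton] at h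
      subst h; exact hjρ hv⟩)
    (by rw [List.nodup_reverse]; exact hndJ)
    hq0j ?_ (three_le_ncard ((hB q0).mpr (Or.inl hq0ρ)) ((hB k).mpr (Or.inl hkρ))
      ((hB j).mpr (Or.inr hjJ)) hq0k hq0j hkjne) ?_
  · intro v hv1 hv2
    rw [List.mem_reverse] at hv2
    rcases List.mem_append.mp hv1 with h | h
    · exact Or.inl (hint v h hv2)
    · exact Or.inr (List.mem_singleton.mp h)
  · have hMl : (ρ ++ J').getLast? = some q0 := by
      rw [getLast?_append_right hJne]; exact hJl
    have hMB : ∀ v ∈ ρ ++ J', v ∈ B := fun v hv => (hB v).mpr (List.mem_append.mp hv)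
    refine ⟨q0, (hB q0).mpr (Or.inl hq0ρ), fun v hv => ?_⟩
    refine reach_in_last (ρ ++ J') hM hMB hMl v ?_
    exact List.mem_append.mpr ((hB v).mp hv)
end Blocks

section Finish

lemma chain_stepsLe_compl {A : V → V → Prop} {j : V} {l : List V}
    (hc : l.Chain' A) (hj : ∀ v ∈ l, v ≠ j) {u v : V}
    (hu : l.head? = some u) (hv : l.getLast? = some v) :
    StepsLe (StepIn A {j}ᶜ) (l.length - 1) u v :=
  chain_stepsLe l (chain_stepIn l hc (fun w hw => by simpa using hj w hw)) u v hu hv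

lemma finish [Fintype V] {A : V → V → Prop} {n x : ℕ} (hn : 3 ≤ n) (hx : n - 2 ≤ x)
    (hblocks : ∀ U : Set V, DirectedSubBlock A U → U.ncard ≤ n)
    {W : Set V} {j k : V}
    {B : Set V} (hBlock : DirectedSubBlock A B) (hjB : j ∈ B)
    {u' y'' : V} {ρ1 ρ2 : List V}
    (h1 : ρ1.Chain' A) (h2 : ρ2.Chain' A) (hnd1 : ρ1.Nodup) (hnd2 : ρ2.Nodup)
    (hh1 : ρ1.head? = some u') (hh2 : ρ2.head? = some u')
    (hl1 : ρ1.getLast? = some k) (hl2 : ρ2.getLast? = some y'')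
    (hy : y'' ∈ W \ {j})
    (hsub : ∀ v, (v ∈ ρ1 ∨ v ∈ ρ2) → v ∈ B ∧ v ≠ j)
    (hint : ∀ v, v ∈ ρ1 → v ∈ ρ2 → v = u') :
    ¬ CyclePart A {k} (W \ {j}) j x := by
  intro hCP
  have hu1 : u' ∈ ρ1 := List.mem_of_mem_head? hh1
  have hu2 : u' ∈ ρ2 := List.mem_of_mem_head? hh2
  have hBn : B.ncard ≤ n := hblocks B hBlock
  have hlen : ρ1.length + ρ2.length ≤ n :=
    le_trans (count_bound hnd1 hnd2 hsub hjB hint hu1 hu2) hBn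
  have hne1 : ρ1 ≠ [] := fun h => by rw [h] at hh1; simp at hh1
  have hne2 : ρ2 ≠ [] := fun h => by rw [h] at hh2; simp at hh2
  have hl1' : 1 ≤ ρ1.length := List.length_pos_iff.mpr hne1
  have hl2' : 1 ≤ ρ2.length := List.length_pos_iff.mpr hne2
  have hs1 : StepsLe (StepIn A {j}ᶜ) (ρ1.length - 1) u' k :=
    chain_stepsLe_compl h1 (fun v hv => (hsub v (Or.inl hv)).2) hh1 hl1
  have hs2 : StepsLe (StepIn A {j}ᶜ) (ρ2.length - 1) u' y'' :=
    chain_stepsLe_compl h2 (fun v hv => (hsub v (Or.inr hv)).2) hh2 hl2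
  have hu'j : u' ∈ ({j}ᶜ : Set V) := by simpa using (hsub u' (Or.inl hu1)).2
  set b := ρ2.length - 1 with hbdef
  have hmem : u' ∈ InSetLe A {j}ᶜ (x - b) {k} ∩ InSetLe A {j}ᶜ b (W \ {j}) := by
    constructor
    · exact ⟨k, rfl, hu'j, stepsLe_mono (by omega) hs1⟩
    · exact ⟨y'', hy, hu'j, hs2⟩
  have hemp := hCP (x - b) b (by omega)
  rw [Set.eq_empty_iff_forall_notMem] at hemp
  exact hemp u' hmem
end Finish

section Monster
variable {A : V → V → Prop}

lemma monster [Fintype V] (A : V → V → Prop) {n x : ℕ} (hn : 3 ≤ n) (hx : n - 2 ≤ x)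
    (hblocks : ∀ U : Set V, DirectedSubBlock A U → U.ncard ≤ n)
    {W : Set V} {j k s : V} (hjW : j ∈ W) (hkW : k ∉ W) (hkj : A k j)
    (hsW : s ∈ W) (hsink : ∀ v ∈ W, ReachIn A W v s)
    (hND : ¬ DynPart A {k} (W \ {j}) {j}) :
    ¬ CyclePart A {k} (W \ {j}) j x := by
  classical
  have hND' : InSet A {j}ᶜ {k} ∩ InSet A {j}ᶜ (W \ {j}) ≠ ∅ := hND
  obtain ⟨u0, hu0k, hu0y⟩ := Set.nonempty_iff_ne_empty.mpr hND'
  obtain ⟨k', hk', hrk⟩ := hu0k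
  rw [Set.mem_singleton_iff] at hk'
  rw [hk'] at hrk
  clear hk' k'
  obtain ⟨y0, hy0, hry⟩ := hu0y
  -- initial simple path from u0 to k avoiding j
  obtain ⟨P0, hP0ne, hP0c, hP0h, hP0l⟩ := rtg_list hrk.2
  have hP0mem : ∀ v ∈ P0, v ∈ ({j}ᶜ : Set V) :=
    chain_mem P0 hP0c (fun h hh => by rw [hP0h] at hh; cases hh; exact hrk.1)
  obtain ⟨P, hPne, hPc, hPnd, hPh, hPl, hPsub⟩ := chain_dedup hP0c hP0ne
  -- initial simple path from u0 to y0 avoiding j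
  obtain ⟨Q0, hQ0ne, hQ0c, hQ0h, hQ0l⟩ := rtg_list hry.2
  have hQ0mem : ∀ v ∈ Q0, v ∈ ({j}ᶜ : Set V) :=
    chain_mem Q0 hQ0c (fun h hh => by rw [hQ0h] at hh; cases hh; exact hry.1)
  obtain ⟨Q, hQne, hQc, hQnd, hQh, hQl, hQsub⟩ := chain_dedup hQ0c hQ0ne
  -- the minimization
  set Good : List V × List V → Prop := fun t =>
    t.1.Chain' A ∧ t.2.Chain' A ∧ t.1.head? = t.2.head? ∧
    t.1.getLast? = some k ∧ (∃ z ∈ W \ {j}, t.2.getLast? = some z) ∧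
    (∀ v ∈ t.1, v ≠ j) ∧ (∀ v ∈ t.2, v ≠ j) ∧ t.1.Nodup ∧ t.2.Nodup with hGoodDef
  have hGex : ∃ m : ℕ, ∃ t : List V × List V, Good t ∧ t.1.length + t.2.length = m := by
    refine ⟨_, (P, Q), ⟨hPc.imp (fun _ _ h => h.2.2), hQc.imp (fun _ _ h => h.2.2),
      by rw [hPh, hQh, hP0h, hQ0h], by rw [hPl, hP0l],
      ⟨y0, hy0, by rw [hQl, hQ0l]⟩, ?_, ?_, hPnd, hQnd⟩, rfl⟩
    · intro v hv
      have := hP0mem v (hPsub v hv); simpa using this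
    · intro v hv
      have := hQ0mem v (hQsub v hv); simpa using this
  obtain ⟨t, hGt, hNt⟩ := Nat.find_spec hGex
  have hminN : ∀ t' : List V × List V, Good t' →
      Nat.find hGex ≤ t'.1.length + t'.2.length := by
    intro t' h
    by_contra hlt
    exact Nat.find_min hGex (by omega) ⟨t', h, rfl⟩
  obtain ⟨hσ1c, hσ2c, hheads, hσ1l, ⟨z, hzW, hσ2l⟩, hσ1j, hσ2j, hσ1nd, hσ2nd⟩ := hGt
  set σ1 := t.1 with hσ1def
  set σ2 := t.2 with hσ2def
  have hσ1ne : σ1 ≠ [] := fun h => by rw [h] at hσ1l; simp at hσ1l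
  have hσ2ne : σ2 ≠ [] := fun h => by rw [h] at hσ2l; simp at hσ2l
  have hph : σ1.head? = some (σ1.head hσ1ne) := List.head?_eq_head hσ1ne
  set p := σ1.head hσ1ne with hpdef
  have hph2 : σ2.head? = some p := by rw [← hheads]; exact hph
  have hpσ1 : p ∈ σ1 := List.mem_of_mem_head? hph
  have hpσ2 : p ∈ σ2 := List.mem_of_mem_head? hph2
  -- minimality: the two paths share only p
  have hm1 : ∀ v, v ∈ σ1 → v ∈ σ2 → v = p := by
    intro v hv1 hv2
    by_contra hvp
    obtain ⟨a₁, a₂, he1⟩ := List.append_of_mem hv1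
    obtain ⟨b₁, b₂, he2⟩ := List.append_of_mem hv2
    have ha₁ : a₁ ≠ [] := by
      intro h
      rw [he1, h] at hph
      simp at hph
      exact hvp hph
    have hb₁ : b₁ ≠ [] := by
      intro h
      rw [he2, h] at hph2
      simp at hph2
      exact hvp hph2
    have hG' : Good (v :: a₂, v :: b₂) := by
      refine ⟨(List.isChain_append.mp (he1 ▸ hσ1c)).2.1,
        (List.isChain_append.mp (he2 ▸ hσ2c)).2.1, by simp,
        by rw [← getLast?_append_cons a₁ a₂ v, ← he1]; exact hσ1l,
        ⟨z, hzW, by rw [← getLast?_append_cons b₁ b₂ v, ← he2]; exact hσ2l⟩,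
        fun w hw => hσ1j w (he1 ▸ List.mem_append.mpr (Or.inr hw)),
        fun w hw => hσ2j w (he2 ▸ List.mem_append.mpr (Or.inr hw)),
        (List.nodup_append'.mp (he1 ▸ hσ1nd)).2.1,
        (List.nodup_append'.mp (he2 ▸ hσ2nd)).2.1⟩
    have hlt := hminN _ hG'
    have hlen1 : σ1.length = a₁.length + (a₂.length + 1) := by
      rw [he1]; simp
    have hlen2 : σ2.length = b₁.length + (b₂.length + 1) := by
      rw [he2]; simp
    have ha₁p : 0 < a₁.length := List.length_pos_iff.mpr ha₁
    simp only [List.length_cons] at hlt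
    omega
  -- path from j to s inside W
  obtain ⟨J0, hJ0ne, hJ0c, hJ0h, hJ0l⟩ := rtg_list (hsink j hjW).2
  have hJ0mem : ∀ v ∈ J0, v ∈ W :=
    chain_mem J0 hJ0c (fun h hh => by rw [hJ0h] at hh; cases hh; exact hjW)
  obtain ⟨J, hJne, hJc', hJnd, hJh, hJl, hJsub⟩ := chain_dedup hJ0c hJ0ne
  rw [hJ0h] at hJh
  rw [hJ0l] at hJl
  have hJmem : ∀ v ∈ J, v ∈ W := fun v hv => hJ0mem v (hJsub v hv)
  have hJcA : J.Chain' A := hJc'.imp (fun _ _ h => h.2.2)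
  -- path from z to s inside W
  obtain ⟨Z0, hZ0ne, hZ0c, hZ0h, hZ0l⟩ := rtg_list (hsink z hzW.1).2
  have hZ0mem : ∀ v ∈ Z0, v ∈ W :=
    chain_mem Z0 hZ0c (fun h hh => by rw [hZ0h] at hh; cases hh; exact hzW.1)
  obtain ⟨Z, hZne, hZc', hZnd, hZh, hZl, hZsub⟩ := chain_dedup hZ0c hZ0ne
  rw [hZ0h] at hZh
  rw [hZ0l] at hZl
  have hZmem : ∀ v ∈ Z, v ∈ W := fun v hv => hZ0mem v (hZsub v hv)
  have hZcA : Z.Chain' A := hZc'.imp (fun _ _ h => h.2.2)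
  have hsJ : s ∈ J := List.mem_of_mem_getLast? hJl
  have hsZ : s ∈ Z := List.mem_of_mem_getLast? hZl
  -- first vertex of J hitting σ1 ∪ σ2 ∪ Z
  obtain ⟨j₁, q0, j₂, heJ, hq0U, hj₁U⟩ :=
    split_first (P := fun v => v ∈ σ1 ∨ v ∈ σ2 ∨ v ∈ Z) J ⟨s, hsJ, Or.inr (Or.inr hsZ)⟩
  have hq0W : q0 ∈ W := hJmem q0 (by rw [heJ]; simp)
  have hq0k : q0 ≠ k := fun h => hkW (h ▸ hq0W)
  have hJsplit : J = (j₁ ++ [q0]) ++ j₂ := by rw [heJ]; simp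
  have hJ'cA : (j₁ ++ [q0]).Chain' A := (List.isChain_append.mp (hJsplit ▸ hJcA)).1
  have hJ'h : (j₁ ++ [q0]).head? = some j := by
    rw [← head?_append_cons j₁ j₂ q0, ← heJ]; exact hJh
  have hJ'l : (j₁ ++ [q0]).getLast? = some q0 := by
    rw [getLast?_append_right (by simp : ([q0] : List V) ≠ [])]; rfl
  have hJ'nd : (j₁ ++ [q0]).Nodup :=
    (List.sublist_append_left _ _).nodup (hJsplit ▸ hJnd)
  have hJ'mem : ∀ v ∈ j₁ ++ [q0], v ∈ W := fun v hv =>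
    hJmem v (hJsplit ▸ List.mem_append.mpr (Or.inl hv))
  have hjJ' : j ∈ j₁ ++ [q0] := List.mem_of_mem_head? hJ'h
  have hq0j₁ : q0 ∉ j₁ := fun h =>
    (List.nodup_append'.mp hJ'nd).2.2 h (by simp)
  have hj₁σ1 : ∀ b ∈ j₁, b ∉ σ1 := fun b hb h => hj₁U b hb (Or.inl h)
  have hj₁σ2 : ∀ b ∈ j₁, b ∉ σ2 := fun b hb h => hj₁U b hb (Or.inr (Or.inl h))
  have hj₁Z : ∀ b ∈ j₁, b ∉ Z := fun b hb h => hj₁U b hb (Or.inr (Or.inr h))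
  have hjσ1 : j ∉ σ1 := fun h => hσ1j j h rfl
  have hjσ2 : j ∉ σ2 := fun h => hσ2j j h rfl
  have hjZq : j ∈ Z → q0 = j := by
    intro hjz
    cases hj : j₁ with
    | nil =>
      rw [hj] at hJ'h; simp at hJ'h; exact hJ'h
    | cons a tl =>
      exfalso
      rw [hj] at hJ'h; simp at hJ'h
      exact hj₁Z j (by rw [hj, hJ'h]; simp) hjz
  by_cases hq0σ1 : q0 ∈ σ1
  · -- Case B : q0 lies on σ1 ; directed cycle q0 →σ1 k → j →J' q0
    obtain ⟨c₁, c₂, heC⟩ := List.append_of_mem hq0σ1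
    have hρc : (q0 :: c₂).Chain' A := (List.isChain_append.mp (heC ▸ hσ1c)).2.1
    have hρl : (q0 :: c₂).getLast? = some k := by
      rw [← getLast?_append_cons c₁ c₂ q0, ← heC]; exact hσ1l
    have hρnd : (q0 :: c₂).Nodup := (List.nodup_append'.mp (heC ▸ hσ1nd)).2.1
    have hρσ1 : ∀ v ∈ q0 :: c₂, v ∈ σ1 := fun v hv =>
      heC ▸ List.mem_append.mpr (Or.inr hv)
    have hq0j : q0 ≠ j := fun h => hjσ1 (h ▸ hq0σ1)
    have hkj' : k ≠ j := fun h => hkW (by rw [h]; exact hjW)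
    have hint : ∀ v, v ∈ q0 :: c₂ → v ∈ j₁ ++ [q0] → v = q0 := by
      intro v hv1 hv2
      rcases List.mem_append.mp hv2 with h | h
      · exact absurd (hρσ1 v hv1) (hj₁σ1 v h)
      · simpa using h
    have hjB : j ∈ ({v | v ∈ q0 :: c₂ ∨ v ∈ j₁ ++ [q0]} : Set V) := Or.inr hjJ'
    have hblk : DirectedSubBlock A {v | v ∈ q0 :: c₂ ∨ v ∈ j₁ ++ [q0]} :=
      cycle_block A (q0 :: c₂) (j₁ ++ [q0]) q0 j k _ (fun v => Iff.rfl)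
        hρc hJ'cA (by simp) hρl hJ'h hJ'l hρnd hJ'nd hkj hq0j hq0k hkj'
        (fun h => hjσ1 (hρσ1 j h)) hint
    refine finish hn hx hblocks hblk hjB hρc (List.isChain_singleton q0) hρnd
      (List.nodup_singleton q0) rfl rfl hρl rfl
      ⟨hq0W, by simp [hq0j]⟩ ?_ ?_
    · intro v hv
      rcases hv with hv | hv
      · exact ⟨Or.inl hv, hσ1j v (hρσ1 v hv)⟩
      · simp only [List.mem_singleton] at hv
        subst hv
        exact ⟨Or.inl (by simp), hq0j⟩
    · intro v _ hv
      simpa using hv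
  by_cases hq0σ2 : q0 ∈ σ2
  · -- Case A : theta p → q0 via σ1·(k→j)·J' and a prefix of σ2
    obtain ⟨d₁, d₂, heD⟩ := List.append_of_mem hq0σ2
    have hq0j : q0 ≠ j := fun h => hjσ2 (h ▸ hq0σ2)
    have hkj' : k ≠ j := fun h => hkW (by rw [h]; exact hjW)
    have hpq0 : p ≠ q0 := fun h => hq0σ1 (h ▸ hpσ1)
    have hσ2split : σ2 = (d₁ ++ [q0]) ++ d₂ := by rw [heD]; simp
    have hρ2c : (d₁ ++ [q0]).Chain' A := (List.isChain_append.mp (hσ2split ▸ hσ2c)).1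
    have hρ2h : (d₁ ++ [q0]).head? = some p := by
      rw [← head?_append_cons d₁ d₂ q0, ← heD]; exact hph2
    have hρ2l : (d₁ ++ [q0]).getLast? = some q0 := by
      rw [getLast?_append_right (by simp : ([q0] : List V) ≠ [])]; rfl
    have hρ2nd : (d₁ ++ [q0]).Nodup := (List.sublist_append_left _ _).nodup (hσ2split ▸ hσ2nd)
    have hρ2σ2 : ∀ v ∈ d₁ ++ [q0], v ∈ σ2 := fun v hv =>
      hσ2split ▸ List.mem_append.mpr (Or.inl hv)
    have hL1c : (σ1 ++ (j₁ ++ [q0])).Chain' A := by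
      refine List.isChain_append.mpr ⟨hσ1c, hJ'cA, ?_⟩
      intro a ha b hb
      rw [hσ1l] at ha
      rw [hJ'h] at hb
      simp only [Option.mem_def, Option.some.injEq] at ha hb
      subst ha; subst hb; exact hkj
    have hL1h : (σ1 ++ (j₁ ++ [q0])).head? = some p := by
      rw [head?_append_left hσ1ne]; exact hph
    have hL1l : (σ1 ++ (j₁ ++ [q0])).getLast? = some q0 := by
      rw [getLast?_append_right (by simp : (j₁ ++ [q0] : List V) ≠ [])]; exact hJ'l
    have hL1nd : (σ1 ++ (j₁ ++ [q0])).Nodup := by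
      rw [List.nodup_append']
      refine ⟨hσ1nd, hJ'nd, ?_⟩
      intro v hv hv'
      rcases List.mem_append.mp hv' with h | h
      · exact hj₁σ1 v h hv
      · simp only [List.mem_singleton] at h; subst h; exact hq0σ1 hv
    have hintθ : ∀ v, v ∈ σ1 ++ (j₁ ++ [q0]) → v ∈ d₁ ++ [q0] → v = p ∨ v = q0 := by
      intro v hv1 hv2
      have hv2' : v ∈ σ2 := hρ2σ2 v hv2
      rcases List.mem_append.mp hv1 with h | h
      · exact Or.inl (hm1 v h hv2')
      · rcases List.mem_append.mp h with h' | h'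
        · exact absurd hv2' (hj₁σ2 v h')
        · exact Or.inr (by simpa using h')
    have hjB : j ∈ ({v | v ∈ σ1 ++ (j₁ ++ [q0]) ∨ v ∈ d₁ ++ [q0]} : Set V) :=
      Or.inl (List.mem_append.mpr (Or.inr hjJ'))
    have hblk : DirectedSubBlock A {v | v ∈ σ1 ++ (j₁ ++ [q0]) ∨ v ∈ d₁ ++ [q0]} := by
      refine dtheta_block A (σ1 ++ (j₁ ++ [q0])) (d₁ ++ [q0]) p q0 _ (fun v => Iff.rfl)
        hL1c hρ2c hL1h hρ2h hL1l hρ2l hL1nd hρ2nd hpq0 hintθ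
        (a := k) (b := j) (c := q0)
        (Or.inl (List.mem_append.mpr (Or.inl (List.mem_of_mem_getLast? hσ1l)))) hjB
        (Or.inr (by simp)) hkj' hq0k.symm hq0j.symm
    refine finish hn hx hblocks hblk hjB hσ1c hρ2c hσ1nd hρ2nd hph hρ2h hσ1l hρ2l
      ⟨hq0W, by simp [hq0j]⟩ ?_ ?_
    · intro v hv
      rcases hv with hv | hv
      · exact ⟨Or.inl (List.mem_append.mpr (Or.inl hv)), hσ1j v hv⟩
      · exact ⟨Or.inr hv, hσ2j v (hρ2σ2 v hv)⟩
    · intro v hv1 hv2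
      exact hm1 v hv1 (hρ2σ2 v hv2)
  -- Case C : q0 ∈ Z only
  have hq0Z : q0 ∈ Z := by
    rcases hq0U with h | h | h
    exacts [absurd h hq0σ1, absurd h hq0σ2, h]
  obtain ⟨e₁, e₂, heE⟩ := List.append_of_mem hq0Z
  have hkj' : k ≠ j := fun h => hkW (by rw [h]; exact hjW)
  have hzσ2 : z ∈ σ2 := List.mem_of_mem_getLast? hσ2l
  have he₁ne : e₁ ≠ [] := by
    intro h
    rw [heE, h] at hZh; simp at hZh
    exact hq0σ2 (by rw [hZh]; exact hzσ2)
  have hze₁ : z ∈ e₁ := by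
    have h : e₁.head? = some z := by rw [heE, head?_append_left he₁ne] at hZh; exact hZh
    exact List.mem_of_mem_head? h
  obtain ⟨f₁, w, f₂, heF, hwP, hf₂⟩ :=
    split_last (P := fun v => v ∈ σ1 ∨ v ∈ σ2) e₁ ⟨z, hze₁, Or.inr hzσ2⟩
  have hZsplit : Z = f₁ ++ w :: (f₂ ++ q0 :: e₂) := by rw [heE, heF]; simp
  have hwZ : w ∈ Z := by rw [hZsplit]; simp
  have hwW : w ∈ W := hZmem w hwZ
  have hwk : w ≠ k := fun h => hkW (h ▸ hwW)
  have hwj : w ≠ j := by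
    rcases hwP with h | h
    exacts [hσ1j w h, hσ2j w h]
  have hζc : (w :: (f₂ ++ [q0])).Chain' A := by
    have h1 : (w :: (f₂ ++ q0 :: e₂)).Chain' A := (List.isChain_append.mp (hZsplit ▸ hZcA)).2.1
    have h2 : (w :: (f₂ ++ q0 :: e₂)) = (w :: (f₂ ++ [q0])) ++ e₂ := by simp
    exact (List.isChain_append.mp (h2 ▸ h1)).1
  have hζnd : (w :: (f₂ ++ [q0])).Nodup := by
    have hsub : (w :: (f₂ ++ [q0])).Sublist Z := by
      rw [hZsplit]
      refine List.Sublist.trans ?_ (List.sublist_append_right f₁ _)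
      rw [show w :: (f₂ ++ q0 :: e₂) = (w :: (f₂ ++ [q0])) ++ e₂ by simp]
      exact List.sublist_append_left _ _
    exact hsub.nodup hZnd
  have hζl : (w :: (f₂ ++ [q0])).getLast? = some q0 := by
    rw [getLast?_cons_ne _ (by simp), getLast?_append_right (by simp : ([q0] : List V) ≠ [])]
    rfl
  have hq0e₁ : q0 ∉ e₁ := fun h => (List.nodup_append'.mp (heE ▸ hZnd)).2.2 h (by simp)
  have hq0f₂ : q0 ∉ f₂ := fun h => hq0e₁ (by rw [heF]; simp [h])
  have hζj : ∀ v ∈ w :: f₂, v ≠ j := by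
    intro v hv hvj
    have hve₁ : v ∈ e₁ := by rw [heF]; exact List.mem_append.mpr (Or.inr hv)
    have hvZ : v ∈ Z := by rw [heE]; exact List.mem_append.mpr (Or.inl hve₁)
    have hq0j : q0 = j := hjZq (hvj ▸ hvZ)
    exact hq0e₁ (by rw [hq0j, ← hvj]; exact hve₁)
  have hf₂σ1 : ∀ b ∈ f₂, b ∉ σ1 := fun b hb h => hf₂ b hb (Or.inl h)
  have hf₂σ2 : ∀ b ∈ f₂, b ∉ σ2 := fun b hb h => hf₂ b hb (Or.inr h)
  have hf₂Z : ∀ b ∈ f₂, b ∈ Z := fun b hb => by rw [hZsplit]; simp [hb]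
  have hf₂j₁ : ∀ b ∈ f₂, b ∉ j₁ := fun b hb h => hj₁Z b h (hf₂Z b hb)
  have hwj₁ : w ∉ j₁ := by
    rcases hwP with h | h
    exacts [fun h' => hj₁σ1 w h' h, fun h' => hj₁σ2 w h' h]
  -- L1 data shared by both subcases is rebuilt per subcase
  rcases hwP with hwσ1 | hwσ2
  · -- Subcase C-b : w ∈ σ1
    obtain ⟨g₁, g₂, heG⟩ := List.append_of_mem hwσ1
    have hρ1c : (w :: g₂).Chain' A := (List.isChain_append.mp (heG ▸ hσ1c)).2.1
    have hρ1l : (w :: g₂).getLast? = some k := by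
      rw [← getLast?_append_cons g₁ g₂ w, ← heG]; exact hσ1l
    have hρ1nd : (w :: g₂).Nodup := (List.nodup_append'.mp (heG ▸ hσ1nd)).2.1
    have hρ1σ1 : ∀ v ∈ w :: g₂, v ∈ σ1 := fun v hv =>
      heG ▸ List.mem_append.mpr (Or.inr hv)
    have hwq0 : w ≠ q0 := fun h => hq0σ1 (h ▸ hwσ1)
    have hL1c : ((w :: g₂) ++ (j₁ ++ [q0])).Chain' A := by
      refine List.isChain_append.mpr ⟨hρ1c, hJ'cA, ?_⟩
      intro a ha b hb
      rw [hρ1l] at ha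
      rw [hJ'h] at hb
      simp only [Option.mem_def, Option.some.injEq] at ha hb
      subst ha; subst hb; exact hkj
    have hL1h : ((w :: g₂) ++ (j₁ ++ [q0])).head? = some w := by
      rw [head?_append_left (by simp : (w :: g₂ : List V) ≠ [])]; rfl
    have hL1l : ((w :: g₂) ++ (j₁ ++ [q0])).getLast? = some q0 := by
      rw [getLast?_append_right (by simp : (j₁ ++ [q0] : List V) ≠ [])]; exact hJ'l
    have hL1nd : ((w :: g₂) ++ (j₁ ++ [q0])).Nodup := by
      rw [List.nodup_append']
      refine ⟨hρ1nd, hJ'nd, ?_⟩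
      intro v hv hv'
      rcases List.mem_append.mp hv' with h | h
      · exact hj₁σ1 v h (hρ1σ1 v hv)
      · simp only [List.mem_singleton] at h; subst h; exact hq0σ1 (hρ1σ1 v hv)
    have hintθ : ∀ v, v ∈ (w :: g₂) ++ (j₁ ++ [q0]) → v ∈ w :: (f₂ ++ [q0]) →
        v = w ∨ v = q0 := by
      intro v hv1 hv2
      have hv2' : v = w ∨ v ∈ f₂ ∨ v = q0 := by
        rcases List.mem_cons.mp hv2 with h | h
        · exact Or.inl h
        · rcases List.mem_append.mp h with h' | h'
          · exact Or.inr (Or.inl h')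
          · exact Or.inr (Or.inr (by simpa using h'))
      rcases hv2' with rfl | hvf | rfl
      · exact Or.inl rfl
      · exfalso
        rcases List.mem_append.mp hv1 with h | h
        · exact hf₂σ1 v hvf (hρ1σ1 v h)
        · rcases List.mem_append.mp h with h' | h'
          · exact hf₂j₁ v hvf h'
          · have hvq : v = q0 := by simpa using h'
            exact hq0f₂ (hvq ▸ hvf)
      · exact Or.inr rfl
    have hjB : j ∈ ({v | v ∈ (w :: g₂) ++ (j₁ ++ [q0]) ∨ v ∈ w :: (f₂ ++ [q0])} : Set V) :=
      Or.inl (List.mem_append.mpr (Or.inr hjJ'))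
    have hblk : DirectedSubBlock A
        {v | v ∈ (w :: g₂) ++ (j₁ ++ [q0]) ∨ v ∈ w :: (f₂ ++ [q0])} := by
      refine dtheta_block A ((w :: g₂) ++ (j₁ ++ [q0])) (w :: (f₂ ++ [q0])) w q0 _
        (fun v => Iff.rfl) hL1c hζc hL1h rfl hL1l hζl hL1nd hζnd hwq0 hintθ
        (a := k) (b := j) (c := w)
        (Or.inl (List.mem_append.mpr (Or.inl (List.mem_of_mem_getLast? hρ1l)))) hjB
        (Or.inr (by simp)) hkj' hwk.symm hwj.symm
    refine finish hn hx hblocks hblk hjB hρ1c (List.isChain_singleton w) hρ1nd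
      (List.nodup_singleton w) rfl rfl hρ1l rfl ⟨hwW, by simp [hwj]⟩ ?_ ?_
    · intro v hv
      rcases hv with hv | hv
      · exact ⟨Or.inl (List.mem_append.mpr (Or.inl hv)), hσ1j v (hρ1σ1 v hv)⟩
      · simp only [List.mem_singleton] at hv
        subst hv
        exact ⟨Or.inl (List.mem_append.mpr (Or.inl (by simp))), hwj⟩
    · intro v _ hv
      simpa using hv
  · -- Subcase C-a : w ∈ σ2
    obtain ⟨g₁, g₂, heG⟩ := List.append_of_mem hwσ2
    have hσ2split : σ2 = (g₁ ++ [w]) ++ g₂ := by rw [heG]; simp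
    have hρ2c : (g₁ ++ [w]).Chain' A := (List.isChain_append.mp (hσ2split ▸ hσ2c)).1
    have hρ2h : (g₁ ++ [w]).head? = some p := by
      rw [← head?_append_cons g₁ g₂ w, ← heG]; exact hph2
    have hρ2l : (g₁ ++ [w]).getLast? = some w := by
      rw [getLast?_append_right (by simp : ([w] : List V) ≠ [])]; rfl
    have hρ2nd : (g₁ ++ [w]).Nodup := (List.sublist_append_left _ _).nodup (hσ2split ▸ hσ2nd)
    have hρ2σ2 : ∀ v ∈ g₁ ++ [w], v ∈ σ2 := fun v hv =>
      hσ2split ▸ List.mem_append.mpr (Or.inl hv)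
    have hpq0 : p ≠ q0 := fun h => hq0σ1 (h ▸ hpσ1)
    have hL1c : (σ1 ++ (j₁ ++ [q0])).Chain' A := by
      refine List.isChain_append.mpr ⟨hσ1c, hJ'cA, ?_⟩
      intro a ha b hb
      rw [hσ1l] at ha
      rw [hJ'h] at hb
      simp only [Option.mem_def, Option.some.injEq] at ha hb
      subst ha; subst hb; exact hkj
    have hL1h : (σ1 ++ (j₁ ++ [q0])).head? = some p := by
      rw [head?_append_left hσ1ne]; exact hph
    have hL1l : (σ1 ++ (j₁ ++ [q0])).getLast? = some q0 := by
      rw [getLast?_append_right (by simp : (j₁ ++ [q0] : List V) ≠ [])]; exact hJ'l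
    have hL1nd : (σ1 ++ (j₁ ++ [q0])).Nodup := by
      rw [List.nodup_append']
      refine ⟨hσ1nd, hJ'nd, ?_⟩
      intro v hv hv'
      rcases List.mem_append.mp hv' with h | h
      · exact hj₁σ1 v h hv
      · simp only [List.mem_singleton] at h; subst h; exact hq0σ1 hv
    have hL2c : ((g₁ ++ [w]) ++ (f₂ ++ [q0])).Chain' A := by
      refine List.isChain_append.mpr ⟨hρ2c, hζc.tail, ?_⟩
      intro a ha b hb
      rw [hρ2l] at ha
      simp only [Option.mem_def, Option.some.injEq] at ha
      subst ha
      exact (List.isChain_cons.mp hζc).1 b hb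
    have hL2h : ((g₁ ++ [w]) ++ (f₂ ++ [q0])).head? = some p := by
      rw [head?_append_left (by simp : (g₁ ++ [w] : List V) ≠ [])]; exact hρ2h
    have hL2l : ((g₁ ++ [w]) ++ (f₂ ++ [q0])).getLast? = some q0 := by
      rw [getLast?_append_right (by simp : (f₂ ++ [q0] : List V) ≠ []),
        getLast?_append_right (by simp : ([q0] : List V) ≠ [])]
      rfl
    have hL2nd : ((g₁ ++ [w]) ++ (f₂ ++ [q0])).Nodup := by
      rw [List.nodup_append']
      refine ⟨hρ2nd, (List.nodup_cons.mp hζnd).2, ?_⟩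
      intro v hv hv'
      have hvσ2 : v ∈ σ2 := hρ2σ2 v hv
      rcases List.mem_append.mp hv' with h | h
      · exact hf₂σ2 v h hvσ2
      · simp only [List.mem_singleton] at h; subst h; exact hq0σ2 hvσ2
    have hL2sub : ∀ v ∈ (g₁ ++ [w]) ++ (f₂ ++ [q0]), v ∈ σ2 ∨ v ∈ f₂ ∨ v = q0 := by
      intro v hv
      rcases List.mem_append.mp hv with h | h
      · exact Or.inl (hρ2σ2 v h)
      · rcases List.mem_append.mp h with h' | h'
        · exact Or.inr (Or.inl h')
        · exact Or.inr (Or.inr (by simpa using h'))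
    have hintθ : ∀ v, v ∈ σ1 ++ (j₁ ++ [q0]) → v ∈ (g₁ ++ [w]) ++ (f₂ ++ [q0]) →
        v = p ∨ v = q0 := by
      intro v hv1 hv2
      rcases hL2sub v hv2 with hvσ2 | hvf | rfl
      · rcases List.mem_append.mp hv1 with h | h
        · exact Or.inl (hm1 v h hvσ2)
        · rcases List.mem_append.mp h with h' | h'
          · exact absurd hvσ2 (hj₁σ2 v h')
          · exact Or.inr (by simpa using h')
      · exfalso
        rcases List.mem_append.mp hv1 with h | h
        · exact hf₂σ1 v hvf h
        · rcases List.mem_append.mp h with h' | h'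
          · exact hf₂j₁ v hvf h'
          · have hvq : v = q0 := by simpa using h'
            exact hq0f₂ (hvq ▸ hvf)
      · exact Or.inr rfl
    have hjB : j ∈ ({v | v ∈ σ1 ++ (j₁ ++ [q0]) ∨ v ∈ (g₁ ++ [w]) ++ (f₂ ++ [q0])} : Set V) :=
      Or.inl (List.mem_append.mpr (Or.inr hjJ'))
    have hblk : DirectedSubBlock A
        {v | v ∈ σ1 ++ (j₁ ++ [q0]) ∨ v ∈ (g₁ ++ [w]) ++ (f₂ ++ [q0])} := by
      refine dtheta_block A (σ1 ++ (j₁ ++ [q0])) ((g₁ ++ [w]) ++ (f₂ ++ [q0])) p q0 _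
        (fun v => Iff.rfl) hL1c hL2c hL1h hL2h hL1l hL2l hL1nd hL2nd hpq0 hintθ
        (a := k) (b := j) (c := w)
        (Or.inl (List.mem_append.mpr (Or.inl (List.mem_of_mem_getLast? hσ1l)))) hjB
        (Or.inr (List.mem_append.mpr (Or.inl (by simp)))) hkj' hwk.symm hwj.symm
    refine finish hn hx hblocks hblk hjB hσ1c hρ2c hσ1nd hρ2nd hph hρ2h hσ1l hρ2l
      ⟨hwW, by simp [hwj]⟩ ?_ ?_
    · intro v hv
      rcases hv with hv | hv
      · exact ⟨Or.inl (List.mem_append.mpr (Or.inl hv)), hσ1j v hv⟩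
      · exact ⟨Or.inr (List.mem_append.mpr (Or.inl hv)), hσ2j v (hρ2σ2 v hv)⟩
    · intro v hv1 hv2
      exact hm1 v hv1 (hρ2σ2 v hv2)
end Monster

section Final
variable {A : V → V → Prop}

lemma notCyclePart_notDynPart {W : Set V} {j k : V} {x : ℕ}
    (h : ¬ CyclePart A {k} (W \ {j}) j x) : ¬ DynPart A {k} (W \ {j}) {j} := by
  intro hD
  apply h
  intro a b _
  rw [Set.eq_empty_iff_forall_notMem]
  rintro u ⟨⟨k', hk', hu1⟩, ⟨y, hy, hu2⟩⟩
  have hmem : u ∈ InSet A {j}ᶜ {k} ∩ InSet A {j}ᶜ (W \ {j}) :=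
    ⟨⟨k', hk', hu1.1, stepsLe_rtg hu1.2⟩, ⟨y, hy, hu2.1, stepsLe_rtg hu2.2⟩⟩
  have hD' : InSet A {j}ᶜ {k} ∩ InSet A {j}ᶜ (W \ {j}) = ∅ := hD
  rw [Set.eq_empty_iff_forall_notMem] at hD'
  exact hD' u hmem

lemma cycleStep_to_exactStep {x : ℕ} {W W' : Set V} (h : CycleStep A x W W') :
    ExactStep A W W' := by
  obtain ⟨k, hk, h', j, hj, hkj, hNC⟩ := h
  exact ⟨k, hk, h', j, hj, hkj, notCyclePart_notDynPart hNC⟩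

def HasSink (A : V → V → Prop) (W : Set V) : Prop :=
  ∃ s ∈ W, ∀ v ∈ W, ReachIn A W v s

lemma reachIn_mono {S S' : Set V} (h : S ⊆ S') {u v : V}
    (hr : ReachIn A S u v) : ReachIn A S' u v :=
  ⟨h hr.1, Relation.ReflTransGen.mono (p := StepIn A S') (fun _ _ hs => ⟨h hs.1, h hs.2.1, hs.2.2⟩) _ _ hr.2⟩

lemma hasSink_pair {P : Set V} (h : ConnectedPair A P) : HasSink A P := by
  obtain ⟨i, j, hij, rfl, harc⟩ := h
  have hi : i ∈ ({i, j} : Set V) := Or.inl rfl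
  have hj : j ∈ ({i, j} : Set V) := Or.inr rfl
  rcases harc with h | h
  · refine ⟨j, hj, ?_⟩
    rintro v (rfl | rfl)
    · exact ⟨hi, Relation.ReflTransGen.single ⟨hi, hj, h⟩⟩
    · exact ⟨hj, Relation.ReflTransGen.refl⟩
  · refine ⟨i, hi, ?_⟩
    rintro v (rfl | rfl)
    · exact ⟨hi, Relation.ReflTransGen.refl⟩
    · exact ⟨hj, Relation.ReflTransGen.single ⟨hj, hi, h⟩⟩

lemma hasSink_step {W W' : Set V} (hs : HasSink A W) (h : ExactStep A W W') :
    HasSink A W' := by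
  obtain ⟨k, hkW, rfl, j, hjW, hkj, -⟩ := h
  obtain ⟨s, hsW, hreach⟩ := hs
  refine ⟨s, Or.inl hsW, ?_⟩
  rintro v (hv | rfl)
  · exact reachIn_mono Set.subset_union_left (hreach v hv)
  · exact ⟨Or.inr rfl, Relation.ReflTransGen.head ⟨Or.inr rfl, Or.inl hjW, hkj⟩
      (reachIn_mono Set.subset_union_left (hreach j hjW)).2⟩

lemma gen_to_xgen [Fintype V] {n x : ℕ} (hn : 3 ≤ n) (hx : n - 2 ≤ x)
    (hblocks : ∀ U : Set V, DirectedSubBlock A U → U.ncard ≤ n)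
    {P Wn : Set V} (hP : ConnectedPair A P)
    (hchain : Relation.ReflTransGen (ExactStep A) P Wn) :
    Relation.ReflTransGen (CycleStep A x) P Wn ∧ HasSink A Wn := by
  induction hchain with
  | refl => exact ⟨Relation.ReflTransGen.refl, hasSink_pair hP⟩
  | tail hab hbc ih =>
    obtain ⟨hrtg, hsink⟩ := ih
    obtain ⟨k, hkW, rfl, j, hjW, hkj, hND⟩ := hbc
    obtain ⟨s, hsW, hreach⟩ := hsink
    refine ⟨hrtg.tail ⟨k, hkW, rfl, j, hjW, hkj,
      monster A hn hx hblocks hjW hkW hkj hsW hreach hND⟩, ?_⟩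
    exact hasSink_step ⟨s, hsW, hreach⟩ ⟨k, hkW, rfl, j, hjW, hkj, hND⟩
end Final

/-- Theorem B.1, combinatorial form. -/
theorem stmt15 [Fintype V] (A : V → V → Prop) (hirr : ∀ v : V, ¬ A v v)
    (n : ℕ) (hn : 3 ≤ n)
    (hex : ∃ X : Set V, DirectedSubBlock A X)
    (hblocks : ∀ U : Set V, DirectedSubBlock A U → U.ncard ≤ n)
    (x : ℕ) (hx : n - 2 ≤ x) :
    ∀ W : Set V, 3 ≤ W.ncard → (XGenerable A x W ↔ GeneratedFromPair A W) := by
  intro W _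
  constructor
  · rintro ⟨P, hP, hchain⟩
    exact ⟨P, hP, Relation.ReflTransGen.mono (p := ExactStep A) (fun _ _ h => cycleStep_to_exactStep h) _ _ hchain⟩
  · rintro ⟨P, hP, hchain⟩
    exact ⟨P, hP, (gen_to_xgen hn hx hblocks hP hchain).1⟩
end

section
/- (Theorem B.2 of the paper, combinatorial form.) Suppose n ≥ 3 and every directed sub-block of D has at least n vertices, and let x ∈ ℕ with x < n − 2. Then for every connected pair W ⊆ V, every j ∈ W and every k ∈ V ∖ W with (k, j) ∈ A, the vertex j is cycle-partitioning at order x with respect to {k} and W ∖ {j}; consequently no set W ⊆ V with |W| ≥ 3 is x-generable. -/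
open Set

variable {V : Type*}

section H
variable {A : V → V → Prop}

private def Adj (A : V → V → Prop) (a b : V) : Prop := a ≠ b ∧ (A a b ∨ A b a)

private lemma adj_symm {a b : V} (h : Adj A a b) : Adj A b a := ⟨h.1.symm, h.2.symm⟩

private lemma getLast?_cons_ne_s16 {a : V} {t : List V} (ht : t ≠ []) :
    (a :: t).getLast? = t.getLast? := by
  cases t with
  | nil => exact absurd rfl ht
  | cons b t' => simp

private lemma exists_suffix_head {w : V} : ∀ {l : List V}, w ∈ l →
    ∃ s : List V, s <:+ l ∧ s.head? = some w := by
  intro l hw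
  induction l with
  | nil => simp at hw
  | cons a t ih =>
    rcases List.mem_cons.mp hw with h | h
    · exact ⟨a :: t, List.suffix_refl _ , by simp [h]⟩
    · obtain ⟨s, hs, hh⟩ := ih h
      exact ⟨s, hs.trans (List.suffix_cons a t), hh⟩

private lemma suffix_getLast?_eq {s l : List V} (h : s <:+ l) (hne : s ≠ []) :
    s.getLast? = l.getLast? := by
  obtain ⟨p, rfl⟩ := h
  rw [List.getLast?_append_of_ne_nil _ hne]

private lemma shorten {r : V → V → Prop} :
    ∀ l : List V, l.Chain' r → l ≠ [] →
      ∃ m : List V, m.Sublist l ∧ m.Nodup ∧ m.Chain' r ∧ m ≠ [] ∧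
        m.head? = l.head? ∧ m.getLast? = l.getLast? := by
  intro l
  induction l with
  | nil => exact fun _ h => absurd rfl h
  | cons a t ih =>
    intro hc _
    rcases eq_or_ne t [] with rfl | ht
    · exact ⟨[a], by simp, by simp, List.isChain_singleton _, by simp, rfl, rfl⟩
    · obtain ⟨m', hsub, hnd, hch, hne, hh, hl⟩ := ih (List.isChain_cons.mp hc).2 ht
      by_cases ha : a ∈ m'
      · obtain ⟨s, hs, hsh⟩ := exists_suffix_head ha
        have hsne : s ≠ [] := by rintro rfl; simp at hsh
        refine ⟨s, (hs.sublist.trans hsub).trans (List.sublist_cons_self a t), hnd.sublist hs.sublist,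
          hch.suffix hs, hsne, ?_, ?_⟩
        · simp [hsh]
        · rw [suffix_getLast?_eq hs hsne, hl, getLast?_cons_ne_s16 ht]
      · refine ⟨a :: m', hsub.cons₂ a, List.nodup_cons.mpr ⟨ha, hnd⟩, ?_, by simp, rfl, ?_⟩
        · refine List.isChain_cons.mpr ⟨fun y hy => (List.isChain_cons.mp hc).1 y ?_, hch⟩
          rwa [hh] at hy
        · rw [getLast?_cons_ne_s16 hne, hl, getLast?_cons_ne_s16 ht]
end H

section H2
variable {A : V → V → Prop}

private lemma disjointify {r : V → V → Prop} :
    ∀ (N : ℕ) (l1 l2 : List V), l1.length + l2.length ≤ N →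
      l1.Chain' r → l2.Chain' r → l1 ≠ [] → l2 ≠ [] → l1.head? = l2.head? →
      ∃ m1 m2 : List V, m1.Sublist l1 ∧ m2.Sublist l2 ∧ m1.Nodup ∧ m2.Nodup ∧
        m1.Chain' r ∧ m2.Chain' r ∧ m1 ≠ [] ∧ m2 ≠ [] ∧ m1.head? = m2.head? ∧
        m1.getLast? = l1.getLast? ∧ m2.getLast? = l2.getLast? ∧
        m1.length ≤ l1.length ∧ m2.length ≤ l2.length ∧
        ∀ w, w ∈ m1 → w ∈ m2 → m1.head? = some w := by
  intro N
  induction N with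
  | zero =>
    intro l1 l2 hlen _ _ h1 _ _
    cases l1 with
    | nil => exact absurd rfl h1
    | cons a t => simp at hlen
  | succ N ih =>
    intro l1 l2 hlen hc1 hc2 h1 h2 hh
    obtain ⟨n1, hs1, hn1, hcn1, hne1, hhn1, hln1⟩ := shorten l1 hc1 h1
    obtain ⟨n2, hs2, hn2, hcn2, hne2, hhn2, hln2⟩ := shorten l2 hc2 h2
    by_cases hsh : (∃ w ∈ n1.tail, w ∈ n2) ∨ (∃ w ∈ n2.tail, w ∈ n1)
    · -- reduce: common vertex, recurse with suffixes
      have key : ∀ (p1 p2 : List V), p1.Sublist l1 → p2.Sublist l2 →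
          p1.Chain' r → p2.Chain' r → p1 ≠ [] → p2 ≠ [] →
          p1.head? = p2.head? → p1.length + p2.length ≤ N →
          p1.getLast? = l1.getLast? → p2.getLast? = l2.getLast? →
          ∃ m1 m2 : List V, m1.Sublist l1 ∧ m2.Sublist l2 ∧ m1.Nodup ∧ m2.Nodup ∧
            m1.Chain' r ∧ m2.Chain' r ∧ m1 ≠ [] ∧ m2 ≠ [] ∧ m1.head? = m2.head? ∧
            m1.getLast? = l1.getLast? ∧ m2.getLast? = l2.getLast? ∧
            m1.length ≤ l1.length ∧ m2.length ≤ l2.length ∧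
            ∀ w, w ∈ m1 → w ∈ m2 → m1.head? = some w := by
        intro p1 p2 hp1 hp2 hcp1 hcp2 hpne1 hpne2 hph hplen hpl1 hpl2
        obtain ⟨m1, m2, a1, a2, b1, b2, c1, c2, d1, d2, e, f1, f2, g1, g2, hfin⟩ :=
          ih p1 p2 hplen hcp1 hcp2 hpne1 hpne2 hph
        exact ⟨m1, m2, a1.trans hp1, a2.trans hp2, b1, b2, c1, c2, d1, d2, e,
          f1.trans hpl1, f2.trans hpl2,
          g1.trans (List.Sublist.length_le hp1),
          g2.trans (List.Sublist.length_le hp2), hfin⟩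
      rcases hsh with ⟨w, hw1, hw2⟩ | ⟨w, hw2, hw1⟩
      · obtain ⟨s1, hs1', hsh1⟩ := exists_suffix_head hw1
        obtain ⟨s2, hs2', hsh2⟩ := exists_suffix_head hw2
        have hs1l : s1 <:+ n1 := hs1'.trans n1.tail_suffix
        have hs1ne : s1 ≠ [] := by rintro rfl; simp at hsh1
        have hs2ne : s2 ≠ [] := by rintro rfl; simp at hsh2
        have hlen1 : s1.length < n1.length := by
          have := hs1'.length_le
          have := n1.length_tail
          have : n1.tail.length < n1.length := by
            cases n1 with | nil => exact absurd rfl hne1 | cons a t => simp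
          omega
        refine key s1 s2 (hs1l.sublist.trans hs1) (hs2'.sublist.trans hs2)
          (hcn1.suffix hs1l) (hcn2.suffix hs2') hs1ne hs2ne (by rw [hsh1, hsh2]) ?_
          ((suffix_getLast?_eq hs1l hs1ne).trans hln1)
          ((suffix_getLast?_eq hs2' hs2ne).trans hln2)
        have := hs2'.length_le
        have := hs1.length_le
        have := hs2.length_le
        omega
      · obtain ⟨s1, hs1', hsh1⟩ := exists_suffix_head hw1
        obtain ⟨s2, hs2', hsh2⟩ := exists_suffix_head hw2
        have hs2l : s2 <:+ n2 := hs2'.trans n2.tail_suffix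
        have hs1ne : s1 ≠ [] := by rintro rfl; simp at hsh1
        have hs2ne : s2 ≠ [] := by rintro rfl; simp at hsh2
        have hlen2 : s2.length < n2.length := by
          have := hs2'.length_le
          have : n2.tail.length < n2.length := by
            cases n2 with | nil => exact absurd rfl hne2 | cons a t => simp
          omega
        refine key s1 s2 (hs1'.sublist.trans hs1) (hs2l.sublist.trans hs2)
          (hcn1.suffix hs1') (hcn2.suffix hs2l) hs1ne hs2ne (by rw [hsh1, hsh2]) ?_
          ((suffix_getLast?_eq hs1' hs1ne).trans hln1)
          ((suffix_getLast?_eq hs2l hs2ne).trans hln2)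
        have := hs1'.length_le
        have := hs1.length_le
        have := hs2.length_le
        omega
    · push_neg at hsh
      refine ⟨n1, n2, hs1, hs2, hn1, hn2, hcn1, hcn2, hne1, hne2, ?_, hln1, hln2,
        hs1.length_le, hs2.length_le, ?_⟩
      · rw [hhn1, hhn2, hh]
      · intro w hwm1 hwm2
        cases n1 with
        | nil => exact absurd rfl hne1
        | cons a t =>
          rcases List.mem_cons.mp hwm1 with rfl | hwt
          · rfl
          · exact absurd hwm2 (hsh.1 w hwt)
end H2

section H3
variable {A : V → V → Prop}

private lemma ustep_symm_s16 {W : Set V} : Symmetric (UStep A W) :=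
  fun _ _ ⟨ha, hb, hne, hor⟩ => ⟨hb, ha, hne.symm, hor.symm⟩

private lemma stepsLe_list {r : V → V → Prop} :
    ∀ (n : ℕ) (u v : V), StepsLe r n u v →
      ∃ l : List V, l.Chain' r ∧ l ≠ [] ∧ l.head? = some u ∧ l.getLast? = some v ∧
        l.length ≤ n + 1 ∧ ∀ w ∈ l, w = u ∨ ∃ z, r z w := by
  intro n
  induction n with
  | zero =>
    intro u v h
    cases h
    exact ⟨[u], List.isChain_singleton _, by simp, rfl, by simp, by simp, fun w hw => Or.inl (by simpa using hw)⟩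
  | succ n ih =>
    intro u v h
    rcases h with rfl | ⟨w, hr, hs⟩
    · exact ⟨[u], List.isChain_singleton _, by simp, rfl, by simp, by simp, fun w hw => Or.inl (by simpa using hw)⟩
    · obtain ⟨l, hc, hne, hh, hl, hlen, hmem⟩ := ih w v hs
      refine ⟨u :: l, List.isChain_cons.mpr ⟨fun y hy => ?_, hc⟩, by simp,
        rfl, by rw [getLast?_cons_ne_s16 hne, hl], by simpa using hlen, ?_⟩
      · rw [hh] at hy
        exact (Option.mem_some_iff.mp hy) ▸ hr
      · intro z hz
        rcases List.mem_cons.mp hz with rfl | hz'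
        · exact Or.inl rfl
        · rcases hmem z hz' with rfl | hex
          · exact Or.inr ⟨u, hr⟩
          · exact Or.inr hex

private lemma chain_reach_last {S T : Set V} :
    ∀ (l : List V), l.Chain' (StepIn A T) → (∀ w ∈ l, w ∈ S) →
      ∀ v ∈ l, ∀ z, l.getLast? = some z → Relation.ReflTransGen (StepIn A S) v z := by
  intro l
  induction l with
  | nil => simp
  | cons a t ih =>
    intro hc hs v hv z hz
    cases t with
    | nil =>
      simp at hz hv
      subst hz; subst hv
      exact Relation.ReflTransGen.refl
    | cons b t' =>
      have hz' : (b :: t').getLast? = some z := by rwa [getLast?_cons_ne_s16 (by simp)] at hz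
      have hc' := List.isChain_cons_cons.mp hc
      have hs' : ∀ w ∈ b :: t', w ∈ S := fun w hw => hs w (List.mem_cons_of_mem _ hw)
      rcases List.mem_cons.mp hv with rfl | hv'
      · exact Relation.ReflTransGen.head ⟨hs v (by simp), hs b (by simp), hc'.1.2.2⟩
          (ih hc'.2 hs' b (by simp) z hz')
      · exact ih hc'.2 hs' v hv' z hz'

private lemma chain_ureach_last {W : Set V} :
    ∀ (l : List V), l.Chain' (Adj A) → (∀ w ∈ l, w ∈ W) →
      ∀ v ∈ l, ∀ z, l.getLast? = some z → Relation.ReflTransGen (UStep A W) v z := by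
  intro l
  induction l with
  | nil => simp
  | cons a t ih =>
    intro hc hs v hv z hz
    cases t with
    | nil =>
      simp at hz hv
      subst hz; subst hv
      exact Relation.ReflTransGen.refl
    | cons b t' =>
      have hz' : (b :: t').getLast? = some z := by rwa [getLast?_cons_ne_s16 (by simp)] at hz
      have hc' := List.isChain_cons_cons.mp hc
      have hs' : ∀ w ∈ b :: t', w ∈ W := fun w hw => hs w (List.mem_cons_of_mem _ hw)
      rcases List.mem_cons.mp hv with rfl | hv'
      · exact Relation.ReflTransGen.head ⟨hs v (by simp), hs b (by simp), hc'.1.1, hc'.1.2⟩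
          (ih hc'.2 hs' b (by simp) z hz')
      · exact ih hc'.2 hs' v hv' z hz'

private lemma uconnected_of_list {W : Set V} (l : List V) (hne : l ≠ [])
    (hc : l.Chain' (Adj A)) (hmem : ∀ w, w ∈ W ↔ w ∈ l) : UConnected A W := by
  obtain ⟨z, hz⟩ := Option.isSome_iff_exists.mp (List.getLast?_isSome.mpr hne)
  refine ⟨⟨z, (hmem z).mpr (List.mem_of_mem_getLast? hz)⟩, fun u hu v hv => ?_⟩
  have h1 := chain_ureach_last l hc (fun w hw => (hmem w).mpr hw) u ((hmem u).mp hu) z hz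
  have h2 := chain_ureach_last l hc (fun w hw => (hmem w).mpr hw) v ((hmem v).mp hv) z hz
  exact h1.trans ((@Relation.ReflTransGen.stdSymm _ _ ⟨fun _ _ h => ustep_symm_s16 h⟩).symm _ _ h2)

end H3

section H4
variable {A : V → V → Prop}

private lemma chain'_reverse_adj {l : List V} (h : l.Chain' (Adj A)) :
    l.reverse.Chain' (Adj A) :=
  (List.isChain_reverse).mpr (h.imp fun _ _ hab => adj_symm hab)

private lemma side_conn (j k m u : V) (m1 m2 : List V)
    (h1c : m1.Chain' (Adj A)) (h2c : m2.Chain' (Adj A))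
    (h1n : m1.Nodup)
    (hh1 : m1.head? = some u) (hh2 : m2.head? = some u)
    (hl1 : m1.getLast? = some k) (hl2 : m2.getLast? = some m)
    (hdisj : ∀ w, w ∈ m1 → w ∈ m2 → w = u)
    (hj1 : j ∉ m1) (hj2 : j ∉ m2)
    (hjk : Adj A j k) (hjm : Adj A j m)
    (v : V) (hv : v ∈ m1) (hvu : v ≠ u) :
    UConnected A ({w | w ∈ m1 ∨ w ∈ m2 ∨ w = j} \ {v}) := by
  obtain ⟨P, Q, hPQ⟩ := List.append_of_mem hv
  have h2ne : m2 ≠ [] := by rintro rfl; simp at hh2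
  have hPne : P ≠ [] := by
    rintro rfl
    rw [hPQ] at hh1; simp at hh1
    exact hvu hh1
  -- P = u :: P.tail
  have hPhead : P.head? = some u := by
    rw [hPQ, List.head?_append_of_ne_nil _ hPne] at hh1; exact hh1
  obtain ⟨P', rfl⟩ : ∃ P', P = u :: P' := by
    cases P with
    | nil => exact absurd rfl hPne
    | cons a P' =>
      have : a = u := by simpa using hPhead
      exact ⟨P', by rw [this]⟩
  have hPc : (u :: P').Chain' (Adj A) := h1c.prefix ⟨v :: Q, hPQ.symm⟩
  have hQc : Q.Chain' (Adj A) := (h1c.suffix ⟨u :: P', hPQ.symm⟩).tail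
  have hnd := hPQ ▸ h1n
  have hndA := List.nodup_append'.mp hnd
  have hvP : v ∉ u :: P' := fun hvp => (hndA.2.2 hvp (by simp))
  have hvQ : v ∉ Q := by
    have := hndA.2.1
    simp only [List.nodup_cons] at this
    exact this.1
  have hvm2 : v ∉ m2 := fun hvm => hvu (hdisj v hv hvm)
  have hvj : v ≠ j := fun h => hj1 (h ▸ hv)
  have hum2 : u ∈ m2 := List.mem_of_mem_head? (by rw [hh2]; rfl)
  -- the path list
  refine uconnected_of_list (Q ++ j :: (m2.reverse ++ P')) (by simp) ?_ ?_
  · -- chain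
    refine List.isChain_append.mpr ?_
    refine ⟨hQc, ?_, ?_⟩
    · rw [List.isChain_cons]
      constructor
      · intro y hy
        rw [List.head?_append_of_ne_nil _ (by simpa using h2ne), List.head?_reverse, hl2] at hy
        exact (Option.mem_some_iff.mp hy) ▸ hjm
      · rw [List.isChain_append]
        refine ⟨chain'_reverse_adj h2c, (List.isChain_cons.mp hPc).2, ?_⟩
        intro x hx y hy
        rw [List.getLast?_reverse, hh2] at hx
        cases Option.mem_some_iff.mp hx
        exact (List.isChain_cons.mp hPc).1 y hy
    · intro x hx y hy
      cases Option.mem_some_iff.mp hy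
      have hQne : Q ≠ [] := by rintro rfl; simp at hx
      have : Q.getLast? = some k := by
        rw [hPQ, List.getLast?_append_of_ne_nil _ (by simp), getLast?_cons_ne_s16 hQne] at hl1
        exact hl1
      rw [this] at hx
      cases Option.mem_some_iff.mp hx
      exact adj_symm hjk
  · -- coverage
    intro w
    simp only [Set.mem_diff, Set.mem_setOf_eq, Set.mem_singleton_iff, List.mem_append,
      List.mem_cons, List.mem_reverse]
    constructor
    · rintro ⟨hw, hwv⟩
      rcases hw with hw | hw | rfl
      · rw [hPQ] at hw
        simp only [List.mem_append, List.mem_cons] at hw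
        rcases hw with hw | hw | hw
        · rcases hw with rfl | hw'
          · exact Or.inr (Or.inr (Or.inl hum2))
          · exact Or.inr (Or.inr (Or.inr hw'))
        · exact absurd hw hwv
        · exact Or.inl hw
      · exact Or.inr (Or.inr (Or.inl hw))
      · exact Or.inr (Or.inl rfl)
    · rintro (hw | rfl | hw | hw)
      · exact ⟨Or.inl (by rw [hPQ]; simp [hw]), fun h => hvQ (h ▸ hw)⟩
      · exact ⟨Or.inr (Or.inr rfl), fun h => hvj h.symm⟩  -- careful direction
      · exact ⟨Or.inr (Or.inl hw), fun h => hvm2 (h ▸ hw)⟩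
      · exact ⟨Or.inl (by rw [hPQ]; simp [hw]), fun h => hvP (h ▸ List.mem_cons_of_mem _ hw)⟩

end H4

section H5
variable {A : V → V → Prop}

private lemma stepIn_adj (hirr : ∀ v : V, ¬ A v v) {S : Set V} {a b : V}
    (h : StepIn A S a b) : Adj A a b :=
  ⟨fun he => hirr a (he ▸ h.2.2), Or.inl h.2.2⟩

private lemma build_block [Fintype V] (hirr : ∀ v : V, ¬ A v v) (j k m u : V) (m1 m2 : List V)
    (h1c : m1.Chain' (StepIn A ({j}ᶜ : Set V))) (h2c : m2.Chain' (StepIn A ({j}ᶜ : Set V)))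
    (h1n : m1.Nodup) (h2n : m2.Nodup)
    (hh1 : m1.head? = some u) (hh2 : m2.head? = some u)
    (hl1 : m1.getLast? = some k) (hl2 : m2.getLast? = some m)
    (hdisj : ∀ w, w ∈ m1 → w ∈ m2 → w = u)
    (hj1 : j ∉ m1) (hj2 : j ∉ m2)
    (hkj : A k j) (hjm : A j m ∨ A m j)
    (hkm : k ≠ m) (hkjne : k ≠ j) (hmjne : m ≠ j) :
    DirectedSubBlock A {w | w ∈ m1 ∨ w ∈ m2 ∨ w = j} := by
  set S : Set V := {w | w ∈ m1 ∨ w ∈ m2 ∨ w = j} with hS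
  have h1ne : m1 ≠ [] := by rintro rfl; simp at hh1
  have h2ne : m2 ≠ [] := by rintro rfl; simp at hh2
  have hkm1 : k ∈ m1 := List.mem_of_mem_getLast? (by rw [hl1]; rfl)
  have hmm2 : m ∈ m2 := List.mem_of_mem_getLast? (by rw [hl2]; rfl)
  have hum1 : u ∈ m1 := List.mem_of_mem_head? (by rw [hh1]; rfl)
  have hum2 : u ∈ m2 := List.mem_of_mem_head? (by rw [hh2]; rfl)
  have hm1S : ∀ w ∈ m1, w ∈ S := fun w hw => Or.inl hw
  have hm2S : ∀ w ∈ m2, w ∈ S := fun w hw => Or.inr (Or.inl hw)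
  have hjS : j ∈ S := Or.inr (Or.inr rfl)
  have hkS : k ∈ S := hm1S k hkm1
  have hmS : m ∈ S := hm2S m hmm2
  have a1c : m1.Chain' (Adj A) := h1c.imp fun _ _ h => stepIn_adj hirr h
  have a2c : m2.Chain' (Adj A) := h2c.imp fun _ _ h => stepIn_adj hirr h
  have hjk : Adj A j k := ⟨fun h => hkjne h.symm, Or.inr hkj⟩
  have hjmA : Adj A j m := ⟨fun h => hmjne h.symm, hjm⟩
  -- obtain m1 = u :: m1', m2 = u :: m2'
  obtain ⟨m1', hm1'⟩ : ∃ t, m1 = u :: t := by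
    cases m1 with
    | nil => exact absurd rfl h1ne
    | cons a t =>
      have ha : a = u := by simpa using hh1
      exact ⟨t, by rw [ha]⟩
  obtain ⟨m2', hm2'⟩ : ∃ t, m2 = u :: t := by
    cases m2 with
    | nil => exact absurd rfl h2ne
    | cons a t =>
      have ha : a = u := by simpa using hh2
      exact ⟨t, by rw [ha]⟩
  constructor
  · -- reachability to a sink
    have reach1 : ∀ v ∈ m1, Relation.ReflTransGen (StepIn A S) v k :=
      fun v hv => chain_reach_last m1 h1c hm1S v hv k hl1
    have reach2 : ∀ v ∈ m2, Relation.ReflTransGen (StepIn A S) v m :=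
      fun v hv => chain_reach_last m2 h2c hm2S v hv m hl2
    rcases hjm with hjm' | hmj'
    · -- A j m : sink is m
      refine ⟨m, hmS, fun v hv => ⟨hv, ?_⟩⟩
      have hjmstep : Relation.ReflTransGen (StepIn A S) j m :=
        Relation.ReflTransGen.single ⟨hjS, hmS, hjm'⟩
      rcases hv with hv | hv | rfl
      · exact ((reach1 v hv).tail ⟨hkS, hjS, hkj⟩).trans hjmstep
      · exact reach2 v hv
      · exact hjmstep
    · -- A m j : sink is j
      refine ⟨j, hjS, fun v hv => ⟨hv, ?_⟩⟩
      rcases hv with hv | hv | rfl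
      · exact (reach1 v hv).tail ⟨hkS, hjS, hkj⟩
      · exact (reach2 v hv).tail ⟨hmS, hjS, hmj'⟩
      · exact Relation.ReflTransGen.refl
  refine ⟨?_, ?_, ?_⟩
  · -- 3 ≤ ncard
    have hsub : ({k, j, m} : Set V) ⊆ S := by
      intro w hw
      rcases hw with rfl | rfl | rfl
      · exact hkS
      · exact hjS
      · exact hmS
    have h3 : ({k, j, m} : Set V).ncard = 3 := by
      rw [Set.ncard_insert_of_notMem (by simp [hkjne, hkm]) (Set.toFinite _),
        Set.ncard_pair (fun h => hmjne h.symm)]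
    calc 3 = ({k, j, m} : Set V).ncard := h3.symm
      _ ≤ S.ncard := Set.ncard_le_ncard hsub (Set.toFinite _)
  · -- UConnected S
    refine uconnected_of_list (j :: (m1.reverse ++ m2.tail)) (by simp) ?_ ?_
    · refine List.isChain_cons.mpr ?_
      refine ⟨?_, ?_⟩
      · intro y hy
        rw [List.head?_append_of_ne_nil _ (by simpa using h1ne), List.head?_reverse, hl1] at hy
        exact (Option.mem_some_iff.mp hy) ▸ hjk
      · rw [List.isChain_append]
        refine ⟨chain'_reverse_adj a1c, a2c.tail, ?_⟩
        intro x hx y hy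
        rw [List.getLast?_reverse, hh1] at hx
        cases Option.mem_some_iff.mp hx
        rw [hm2'] at hy
        exact (List.isChain_cons.mp (hm2' ▸ a2c)).1 y (by simpa using hy)
    · intro w
      simp only [hS, Set.mem_setOf_eq, List.mem_cons, List.mem_append, List.mem_reverse]
      constructor
      · rintro (hw | hw | rfl)
        · exact Or.inr (Or.inl hw)
        · rw [hm2'] at hw
          rcases List.mem_cons.mp hw with rfl | hw'
          · exact Or.inr (Or.inl hum1)
          · exact Or.inr (Or.inr (by rw [hm2']; exact hw'))
        · exact Or.inl rfl
      · rintro (rfl | hw | hw)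
        · exact Or.inr (Or.inr rfl)
        · exact Or.inl hw
        · exact Or.inr (Or.inl (List.mem_of_mem_tail hw))
  · -- deleting any vertex
    intro v hv
    by_cases hvj : v = j
    · subst hvj
      refine uconnected_of_list (m1.reverse ++ m2.tail)
        (fun hE => h1ne (by simpa using (List.append_eq_nil_iff.mp hE).1)) ?_ ?_
      · refine List.isChain_append.mpr ?_
        refine ⟨chain'_reverse_adj a1c, a2c.tail, ?_⟩
        intro x hx y hy
        rw [List.getLast?_reverse, hh1] at hx
        cases Option.mem_some_iff.mp hx
        rw [hm2'] at hy
        exact (List.isChain_cons.mp (hm2' ▸ a2c)).1 y (by simpa using hy)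
      · intro w
        simp only [hS, Set.mem_diff, Set.mem_setOf_eq, Set.mem_singleton_iff,
          List.mem_append, List.mem_reverse]
        constructor
        · rintro ⟨hw | hw | rfl, hwv⟩
          · exact Or.inl hw
          · rw [hm2'] at hw
            rcases List.mem_cons.mp hw with rfl | hw'
            · exact Or.inl hum1
            · exact Or.inr (by rw [hm2']; exact hw')
          · exact absurd rfl hwv
        · rintro (hw | hw)
          · exact ⟨Or.inl hw, fun h => hj1 (h ▸ hw)⟩
          · exact ⟨Or.inr (Or.inl (List.mem_of_mem_tail hw)),
              fun h => hj2 (h ▸ List.mem_of_mem_tail hw)⟩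
    by_cases hvu : v = u
    · subst hvu
      -- list : m1.tail ++ j :: m2.tail.reverse
      have hum1' : v ∉ m1' := by
        rw [hm1'] at h1n; exact (List.nodup_cons.mp h1n).1
      have hum2' : v ∉ m2' := by
        rw [hm2'] at h2n; exact (List.nodup_cons.mp h2n).1
      refine uconnected_of_list (m1' ++ j :: m2'.reverse) (by simp) ?_ ?_
      · refine List.isChain_append.mpr ?_
        refine ⟨(hm1' ▸ a1c).tail, ?_, ?_⟩
        · rw [List.isChain_cons]
          refine ⟨?_, chain'_reverse_adj ((hm2' ▸ a2c).tail)⟩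
          intro y hy
          have hm2'ne : m2' ≠ [] := by rintro rfl; simp at hy
          rw [List.head?_reverse] at hy
          have : m2'.getLast? = some m := by
            rw [hm2', getLast?_cons_ne_s16 hm2'ne] at hl2; exact hl2
          rw [this] at hy
          exact (Option.mem_some_iff.mp hy) ▸ hjmA
        · intro x hx y hy
          cases Option.mem_some_iff.mp hy
          have hm1'ne : m1' ≠ [] := by rintro rfl; simp at hx
          have : m1'.getLast? = some k := by
            rw [hm1', getLast?_cons_ne_s16 hm1'ne] at hl1; exact hl1
          rw [this] at hx
          cases Option.mem_some_iff.mp hx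
          exact adj_symm hjk
      · intro w
        simp only [hS, Set.mem_diff, Set.mem_setOf_eq, Set.mem_singleton_iff,
          List.mem_append, List.mem_cons, List.mem_reverse]
        constructor
        · rintro ⟨hw | hw | rfl, hwv⟩
          · rw [hm1'] at hw
            rcases List.mem_cons.mp hw with rfl | hw'
            · exact absurd rfl hwv
            · exact Or.inl hw'
          · rw [hm2'] at hw
            rcases List.mem_cons.mp hw with rfl | hw'
            · exact absurd rfl hwv
            · exact Or.inr (Or.inr hw')
          · exact Or.inr (Or.inl rfl)
        · rintro (hw | rfl | hw)
          · exact ⟨Or.inl (by rw [hm1']; exact List.mem_cons_of_mem _ hw),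
              fun h => hum1' (h ▸ hw)⟩
          · exact ⟨Or.inr (Or.inr rfl), fun h => hj1 (h.symm ▸ hum1)⟩
          · exact ⟨Or.inr (Or.inl (by rw [hm2']; exact List.mem_cons_of_mem _ hw)),
              fun h => hum2' (h ▸ hw)⟩
    -- now v ≠ j, v ≠ u : v ∈ m1 or v ∈ m2
    rcases hv with hv | hv | hv
    · exact side_conn j k m u m1 m2 a1c a2c h1n hh1 hh2 hl1 hl2 hdisj hj1 hj2 hjk hjmA v hv hvu
    · have hswap : ({w | w ∈ m2 ∨ w ∈ m1 ∨ w = j} : Set V) = S := by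
        ext w; simp only [hS, Set.mem_setOf_eq]; tauto
      have := side_conn j m k u m2 m1 a2c a1c h2n hh2 hh1 hl2 hl1
        (fun w hw2 hw1 => hdisj w hw1 hw2) hj2 hj1 hjmA hjk v hv hvu
      rwa [hswap] at this
    · exact absurd hv hvj

end H5

section H6

private lemma key_part [Fintype V] (A : V → V → Prop) (hirr : ∀ v : V, ¬ A v v)
    (n : ℕ) (hn : 3 ≤ n)
    (hblocks : ∀ U : Set V, DirectedSubBlock A U → n ≤ U.ncard)
    (x : ℕ) (hx : x < n - 2) :
    ∀ W : Set V, ConnectedPair A W → ∀ j ∈ W, ∀ k, k ∉ W → A k j →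
      CyclePart A {k} (W \ {j}) j x := by
  classical
  intro W hW j hj k hk hkj
  -- extract the "other" vertex m of the pair
  obtain ⟨m, hmW, hmj, hWj, hjm⟩ : ∃ m, m ∈ W ∧ m ≠ j ∧ W \ {j} = {m} ∧ (A j m ∨ A m j) := by
    obtain ⟨i1, i2, hne, rfl, harc⟩ := hW
    rcases hj with rfl | rfl
    · refine ⟨i2, by simp, fun h => hne h.symm, ?_, harc⟩
      ext w
      simp only [Set.mem_diff, Set.mem_insert_iff, Set.mem_singleton_iff]
      constructor
      · rintro ⟨h1 | h1, h2⟩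
        · exact absurd h1 h2
        · exact h1
      · rintro rfl; exact ⟨Or.inr rfl, fun h => hne h.symm⟩
    · refine ⟨i1, by simp, hne, ?_, harc.symm⟩
      ext w
      simp only [Set.mem_diff, Set.mem_insert_iff, Set.mem_singleton_iff]
      constructor
      · rintro ⟨h1 | h1, h2⟩
        · exact h1
        · exact absurd h1 h2
      · rintro rfl; exact ⟨Or.inl rfl, hne⟩
  have hkjne : k ≠ j := fun h => hk (h ▸ hj)
  have hkm : k ≠ m := fun h => hk (h ▸ hmW)
  intro a b hab
  by_contra hne
  obtain ⟨v, hv⟩ := Set.nonempty_iff_ne_empty.mpr hne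
  rw [hWj] at hv
  obtain ⟨hv1, hv2⟩ := hv
  obtain ⟨hvm1, hsteps1⟩ : v ∈ ({j}ᶜ : Set V) ∧ StepsLe (StepIn A {j}ᶜ) a v k := by
    obtain ⟨x1, hx1, hr⟩ := hv1
    rw [Set.mem_singleton_iff] at hx1
    exact ⟨hr.1, hx1 ▸ hr.2⟩
  obtain ⟨hsteps2⟩ : StepsLe (StepIn A {j}ᶜ) b v m ∧ True := by
    obtain ⟨x2, hx2, hr⟩ := hv2
    rw [Set.mem_singleton_iff] at hx2
    exact ⟨hx2 ▸ hr.2, trivial⟩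
  obtain ⟨l1, hc1, hne1, hh1, hl1, hlen1, hmem1⟩ := stepsLe_list a v k hsteps1
  obtain ⟨l2, hc2, hne2, hh2, hl2, hlen2, hmem2⟩ := stepsLe_list b v m hsteps2
  have hj1 : j ∉ l1 := by
    intro hjl
    rcases hmem1 j hjl with rfl | ⟨z, hz⟩
    · exact hvm1 rfl
    · exact hz.2.1 rfl
  have hj2 : j ∉ l2 := by
    intro hjl
    rcases hmem2 j hjl with rfl | ⟨z, hz⟩
    · exact hvm1 rfl
    · exact hz.2.1 rfl
  obtain ⟨m1, m2, hsub1, hsub2, hn1, hn2, hcm1, hcm2, hm1ne, hm2ne, hheq, hgl1, hgl2,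
    hml1, hml2, hdisj⟩ :=
    disjointify (l1.length + l2.length) l1 l2 le_rfl hc1 hc2 hne1 hne2 (by rw [hh1, hh2])
  obtain ⟨u, hu⟩ := Option.isSome_iff_exists.mp
    ((List.isSome_head?).mpr hm1ne)
  have hS := build_block hirr j k m u m1 m2 hcm1 hcm2 hn1 hn2 hu (by rw [← hheq, hu])
    (by rw [hgl1, hl1]) (by rw [hgl2, hl2])
    (fun w hw1 hw2 => by have := hdisj w hw1 hw2; rw [hu] at this; exact (Option.some_inj.mp this).symm)
    (fun h => hj1 (hsub1.mem h)) (fun h => hj2 (hsub2.mem h)) hkj hjm hkm hkjne hmj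
  have hcard := hblocks _ hS
  -- cardinality bound
  obtain ⟨m2', hm2'⟩ : ∃ t, m2 = u :: t := by
    cases m2 with
    | nil => exact absurd rfl hm2ne
    | cons c t =>
      have hc' : c = u := by
        have : (c :: t).head? = some u := by rw [← hheq, hu]
        simpa using this
      exact ⟨t, by rw [hc']⟩
  have hum1 : u ∈ m1 := List.mem_of_mem_head? (by rw [hu]; rfl)
  have hsubF : ({w | w ∈ m1 ∨ w ∈ m2 ∨ w = j} : Set V) ⊆
      ↑(m1.toFinset ∪ (m2'.toFinset ∪ {j})) := by
    intro w hw
    simp only [Finset.coe_union, Set.mem_union, Finset.coe_singleton, Set.mem_singleton_iff,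
      List.coe_toFinset, Set.mem_setOf_eq]
    rcases hw with hw | hw | rfl
    · exact Or.inl hw
    · rw [hm2'] at hw
      rcases List.mem_cons.mp hw with rfl | hw'
      · exact Or.inl hum1
      · exact Or.inr (Or.inl hw')
    · exact Or.inr (Or.inr rfl)
  have hb1 : ({w | w ∈ m1 ∨ w ∈ m2 ∨ w = j} : Set V).ncard ≤
      (m1.toFinset ∪ (m2'.toFinset ∪ {j})).card := by
    rw [← Set.ncard_coe_finset]
    exact Set.ncard_le_ncard hsubF (Finset.finite_toSet _)
  have hb2 : (m1.toFinset ∪ (m2'.toFinset ∪ {j})).card ≤ m1.length + (m2'.length + 1) :=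
    (Finset.card_union_le _ _).trans (by
      have := Finset.card_union_le m2'.toFinset ({j} : Finset V)
      have h1 := List.toFinset_card_le m1
      have h2 := List.toFinset_card_le m2'
      simp only [Finset.card_singleton] at this
      omega)
  have hlm2' : m2'.length + 1 = m2.length := by rw [hm2']; simp
  have hxn : x + 2 < n := by omega
  omega

end H6

/-- Theorem B.2, combinatorial form. -/
theorem stmt16 [Fintype V] (A : V → V → Prop) (hirr : ∀ v : V, ¬ A v v)
    (n : ℕ) (hn : 3 ≤ n)
    (hblocks : ∀ U : Set V, DirectedSubBlock A U → n ≤ U.ncard)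
    (x : ℕ) (hx : x < n - 2) :
    (∀ W : Set V, ConnectedPair A W → ∀ j ∈ W, ∀ k, k ∉ W → A k j →
      CyclePart A {k} (W \ {j}) j x) ∧
    (∀ W : Set V, 3 ≤ W.ncard → ¬ XGenerable A x W) := by
  have key := key_part A hirr n hn hblocks x hx
  refine ⟨key, ?_⟩
  rintro W h3 ⟨P, hP, hchain⟩
  rcases Relation.ReflTransGen.cases_head hchain with rfl | ⟨W', hstep, _⟩
  · obtain ⟨i1, i2, hne, rfl, _⟩ := hP
    rw [Set.ncard_pair hne] at h3
    omega
  · obtain ⟨kk, hkP, _, jj, hjP, hA, hnc⟩ := hstep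
    exact hnc (key P hP jj hjP kk hkP hA)
end

section
/- (Sub-claim in the proof of Theorem B.2 of the paper.) Let {i, m} ⊆ V be a connected pair, let j ∈ V ∖ {i, m} with (j, i) ∈ A, and let x ∈ ℕ. If i is NOT cycle-partitioning at order x with respect to {j} and {m}, then there exists U ⊆ V with {i, j, m} ⊆ U and |U| ≤ x + 2 such that D[U] is a directed sub-block. -/
open Set

variable {V : Type*}

section Helpers


variable {r r' : V → V → Prop}

/-- Walk from `u` to `v` with vertex list `L` (head `u`, last `v`). -/
inductive Wlk (r : V → V → Prop) : V → V → List V → Prop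
  | nil (u : V) : Wlk r u u [u]
  | cons {u v w : V} {L : List V} : r u v → Wlk r v w L → Wlk r u w (u :: L)

lemma Wlk.head_eq {u v : V} {L : List V} (h : Wlk r u v L) : ∃ T, L = u :: T := by
  cases h <;> exact ⟨_, rfl⟩

lemma Wlk.mem_head {u v : V} {L : List V} (h : Wlk r u v L) : u ∈ L := by
  obtain ⟨T, rfl⟩ := h.head_eq; simp

lemma Wlk.mem_last {u v : V} {L : List V} (h : Wlk r u v L) : v ∈ L := by
  induction h with
  | nil => simp
  | cons h hw ih => simp [ih]

lemma Wlk.getLast?_eq {u v : V} {L : List V} (h : Wlk r u v L) : L.getLast? = some v := by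
  induction h with
  | nil => rfl
  | cons h hw ih =>
    obtain ⟨T, rfl⟩ := hw.head_eq
    rw [List.getLast?_cons_cons]; exact ih

lemma Wlk.head_prop {u v : V} {L : List V} (h : Wlk r u v L) : u = v ∨ ∃ q, r u q := by
  cases h with
  | nil => exact Or.inl rfl
  | cons h hw => exact Or.inr ⟨_, h⟩

lemma Wlk.mem_prop {u v w : V} {L : List V} (h : Wlk r u v L) (hm : w ∈ L) :
    w = u ∨ ∃ p, r p w := by
  induction h with
  | nil => simp at hm; exact Or.inl hm
  | cons h hw ih =>
    rcases List.mem_cons.mp hm with h1 | h2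
    · exact Or.inl h1
    · rcases ih h2 with h3 | h3
      · exact Or.inr ⟨_, h3 ▸ h⟩
      · exact Or.inr h3

lemma Wlk.reach_last {u v : V} {L : List V} (h : Wlk r u v L) :
    ∀ w ∈ L, Relation.ReflTransGen r w v := by
  induction h with
  | nil => intro w hw; simp at hw; subst hw; exact .refl
  | cons hstep hw ih =>
    intro w hwm
    rcases List.mem_cons.mp hwm with rfl | h2
    · exact (ih _ hw.mem_head).head hstep
    · exact ih _ h2

lemma Wlk.chain' {u v : V} {L : List V} (h : Wlk r u v L) : L.Chain' r := by
  induction h with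
  | nil => exact List.IsChain.singleton _
  | cons hstep hw ih =>
    obtain ⟨T, rfl⟩ := hw.head_eq
    exact List.isChain_cons_cons.mpr ⟨hstep, ih⟩

lemma Wlk.mono_mem {u v : V} {L : List V} (h : Wlk r u v L)
    (hm : ∀ p q, p ∈ L → q ∈ L → r p q → r' p q) : Wlk r' u v L := by
  induction h with
  | nil => exact .nil _
  | cons hstep hw ih =>
    exact .cons (hm _ _ (by simp) (by simp [hw.mem_head]) hstep)
      (ih fun p q hp hq => hm p q (by simp [hp]) (by simp [hq]))

lemma Wlk.split {u v w : V} {L : List V} (h : Wlk r u v L) (hm : w ∈ L) :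
    ∃ L1 L2, L = L1 ++ L2 ∧ Wlk r w v L2 := by
  induction h with
  | nil =>
    simp at hm; subst hm
    exact ⟨[], [w], rfl, .nil w⟩
  | cons hstep hw ih =>
    rcases List.mem_cons.mp hm with rfl | h2
    · exact ⟨[], _, rfl, .cons hstep hw⟩
    · obtain ⟨L1, L2, rfl, hW⟩ := ih h2
      exact ⟨_ :: L1, L2, rfl, hW⟩

lemma Wlk.nodup {u v : V} {L : List V} (h : Wlk r u v L) :
    ∃ L', Wlk r u v L' ∧ L'.Nodup ∧ L'.length ≤ L.length := by
  induction h with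
  | nil u => exact ⟨[u], .nil u, by simp, le_rfl⟩
  | @cons a b c T hstep hw ih =>
    obtain ⟨L', hW', hnd, hlen⟩ := ih
    by_cases hu : a ∈ L'
    · obtain ⟨L1, L2, rfl, hW2⟩ := hW'.split hu
      refine ⟨L2, hW2, hnd.sublist (List.sublist_append_right L1 L2), ?_⟩
      simp at hlen ⊢; omega
    · exact ⟨a :: L', .cons hstep hW', List.nodup_cons.mpr ⟨hu, hnd⟩, by simpa using hlen⟩

lemma stepsLe_wlk : ∀ {n : ℕ} {u v : V}, StepsLe r n u v →
    ∃ L, Wlk r u v L ∧ L.length ≤ n + 1 := by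
  intro n
  induction n with
  | zero =>
    intro u v h
    cases h
    exact ⟨[u], .nil u, by simp⟩
  | succ n ih =>
    intro u v h
    rcases h with rfl | ⟨w, hr, hs⟩
    · exact ⟨[u], .nil u, by simp⟩
    · obtain ⟨L, hW, hl⟩ := ih hs
      exact ⟨u :: L, .cons hr hW, by simp; omega⟩

lemma wlk_reduce (r : V → V → Prop) : ∀ (n : ℕ) (u j m : V) (L M : List V),
    Wlk r u j L → Wlk r u m M → L.length + M.length ≤ n →
    ∃ u' L' M', Wlk r u' j L' ∧ Wlk r u' m M' ∧
      L'.length + M'.length ≤ L.length + M.length ∧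
      L'.Nodup ∧ M'.Nodup ∧ ∀ w, w ∈ L' → w ∈ M' → w = u' := by
  intro n
  induction n with
  | zero =>
    intro u j m L M hL hM hn
    obtain ⟨T, rfl⟩ := hL.head_eq
    simp at hn
  | succ n ih =>
    intro u j m L M hL hM hn
    obtain ⟨L0, hL0, hndL, hlenL⟩ := hL.nodup
    obtain ⟨M0, hM0, hndM, hlenM⟩ := hM.nodup
    by_cases hshare : ∀ w, w ∈ L0 → w ∈ M0 → w = u
    · exact ⟨u, L0, M0, hL0, hM0, by omega, hndL, hndM, hshare⟩
    · push_neg at hshare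
      obtain ⟨w, hwL, hwM, hwu⟩ := hshare
      obtain ⟨L1, L2, hEL, hW2⟩ := hL0.split hwL
      obtain ⟨M1, M2, hEM, hV2⟩ := hM0.split hwM
      have hL1 : L1 ≠ [] := by
        rintro rfl
        obtain ⟨T, hT⟩ := hL0.head_eq
        obtain ⟨T', hT'⟩ := hW2.head_eq
        simp at hEL
        rw [hT, hT'] at hEL
        injection hEL with h _
        exact hwu h.symm
      have hM1 : M1 ≠ [] := by
        rintro rfl
        obtain ⟨T, hT⟩ := hM0.head_eq
        obtain ⟨T', hT'⟩ := hV2.head_eq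
        simp at hEM
        rw [hT, hT'] at hEM
        injection hEM with h _
        exact hwu h.symm
      have h1 : 1 ≤ L1.length := List.length_pos_iff.mpr hL1
      have h2 : 1 ≤ M1.length := List.length_pos_iff.mpr hM1
      have hlen2 : L2.length + M2.length ≤ n := by
        have e1 : L0.length = L1.length + L2.length := by rw [hEL]; simp
        have e2 : M0.length = M1.length + M2.length := by rw [hEM]; simp
        omega
      obtain ⟨u', L', M', hA, hB, hC, hD, hE, hF⟩ := ih w j m L2 M2 hW2 hV2 hlen2
      refine ⟨u', L', M', hA, hB, ?_, hD, hE, hF⟩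
      have e1 : L0.length = L1.length + L2.length := by rw [hEL]; simp
      have e2 : M0.length = M1.length + M2.length := by rw [hEM]; simp
      omega

lemma chain_reach {a : V} : ∀ {C : List V}, List.Chain r a C →
    ∀ w ∈ a :: C, Relation.ReflTransGen r a w := by
  intro C
  induction C generalizing a with
  | nil =>
    intro _ w hw
    simp at hw; subst hw; exact .refl
  | cons b T ih =>
    intro h w hw
    obtain ⟨hab, hbT⟩ := List.isChain_cons_cons.mp h
    rcases List.mem_cons.mp hw with rfl | hw'
    · exact .refl
    · exact (ih hbT w hw').head hab

lemma chain'_connect (hsym : Symmetric r) {C : List V} (hC : C.Chain' r) :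
    ∀ u ∈ C, ∀ v ∈ C, Relation.ReflTransGen r u v := by
  intro u hu v hv
  cases C with
  | nil => simp at hu
  | cons a T =>
    have h : List.Chain r a T := hC
    have h1 := chain_reach h u hu
    have h2 := chain_reach h v hv
    exact ((haveI : Std.Symm r := ⟨hsym⟩; Std.Symm.symm _ _ h1)).trans h2

lemma chain'_mono_mem : ∀ {C : List V}, C.Chain' r →
    (∀ p q, p ∈ C → q ∈ C → r p q → r' p q) → C.Chain' r' := by
  intro C
  induction C with
  | nil => intro _ _; exact List.IsChain.nil
  | cons a T ih =>
    intro hC hm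
    cases T with
    | nil => exact List.IsChain.singleton _
    | cons b T' =>
      replace hC := List.isChain_cons_cons.mp hC
      exact List.isChain_cons_cons.mpr ⟨hm _ _ (by simp) (by simp) hC.1,
        ih hC.2 fun p q hp hq => hm p q (by simp [hp]) (by simp [hq])⟩

/-- A cyclic list: chain plus closing edge. -/
def IsCyc (r : V → V → Prop) (C : List V) : Prop :=
  C.Chain' r ∧ ∀ x ∈ C.getLast?, ∀ y ∈ C.head?, r x y

lemma isCyc_rotate {C1 C2 : List V} (h : IsCyc r (C1 ++ C2)) : IsCyc r (C2 ++ C1) := by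
  obtain ⟨hc, hcl⟩ := h
  by_cases hc1 : C1 = []
  · subst hc1; constructor
    · simpa using hc
    · simpa using hcl
  by_cases hc2 : C2 = []
  · subst hc2; constructor
    · simpa using hc
    · simpa using hcl
  replace hc := List.isChain_append.mp hc
  constructor
  · apply List.isChain_append.mpr
    refine ⟨hc.2.1, hc.1, ?_⟩
    intro x hx y hy
    apply hcl x ?_ y ?_
    · rw [List.getLast?_append_of_ne_nil _ hc2]; exact hx
    · rw [List.head?_append_of_ne_nil _ hc1]; exact hy
  · intro x hx y hy
    apply hc.2.2 x ?_ y ?_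
    · rw [List.getLast?_append_of_ne_nil _ hc1] at hx; exact hx
    · rw [List.head?_append_of_ne_nil _ hc2] at hy; exact hy

lemma uStep_symm {A : V → V → Prop} {S : Set V} : Symmetric (UStep A S) :=
  fun _ _ h => ⟨h.2.1, h.1, h.2.2.1.symm, h.2.2.2.symm⟩

end Helpers

/-- sub-claim in the proof of Theorem B.2. -/
theorem stmt17 [Fintype V] (A : V → V → Prop) (hirr : ∀ v : V, ¬ A v v)
    (i m j : V) (him : i ≠ m) (hpair : A i m ∨ A m i)
    (hj : j ∉ ({i, m} : Set V)) (hji : A j i) (x : ℕ)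
    (hncp : ¬ CyclePart A {j} {m} i x) :
    ∃ U : Set V, ({i, j, m} : Set V) ⊆ U ∧ U.ncard ≤ x + 2 ∧
      DirectedSubBlock A U := by
  simp only [Set.mem_insert_iff, Set.mem_singleton_iff, not_or] at hj
  obtain ⟨hjine, hjm⟩ := hj
  rw [CyclePart] at hncp
  push_neg at hncp
  obtain ⟨a, b, hab, hne⟩ := hncp
  obtain ⟨u, huL, huM⟩ := hne
  obtain ⟨j', hj', hrj⟩ := huL
  obtain ⟨m', hm', hrm⟩ := huM
  simp only [Set.mem_singleton_iff] at hj' hm'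
  rw [hj'] at hrj
  rw [hm'] at hrm
  clear hj' hm'
  classical
  obtain ⟨L, hWL, hlL⟩ := stepsLe_wlk hrj.2
  obtain ⟨M, hWM, hlM⟩ := stepsLe_wlk hrm.2
  obtain ⟨u', L0, M0, hWL0, hWM0, hsum, hndL, hndM, hshare⟩ :=
    wlk_reduce (StepIn A {i}ᶜ) (L.length + M.length) u j m L M hWL hWM le_rfl
  -- basic facts about the reduced walks
  have hui : u' ≠ i := by
    rcases hWL0.head_prop with rfl | ⟨q, hq⟩
    · exact hjine
    · simpa using hq.1
  have hLni : ∀ w ∈ L0, w ≠ i := by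
    intro w hw
    rcases hWL0.mem_prop hw with rfl | ⟨p, hp⟩
    · exact hui
    · simpa using hp.2.1
  have hMni : ∀ w ∈ M0, w ≠ i := by
    intro w hw
    rcases hWM0.mem_prop hw with rfl | ⟨p, hp⟩
    · exact hui
    · simpa using hp.2.1
  obtain ⟨Mt, hMt⟩ := hWM0.head_eq
  have huMt : u' ∉ Mt := by
    have := hMt ▸ hndM
    exact (List.nodup_cons.mp this).1
  have hndMt : Mt.Nodup := (List.nodup_cons.mp (hMt ▸ hndM)).2
  set C : List V := L0 ++ i :: Mt.reverse with hC
  set U : Set V := {w : V | w ∈ C} with hU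
  -- memberships
  have hLsub : ∀ w ∈ L0, w ∈ U := by intro w hw; simp [hU, hC, hw]
  have hiU : i ∈ U := by simp [hU, hC]
  have hjU : j ∈ U := hLsub j hWL0.mem_last
  have huU : u' ∈ U := hLsub u' hWL0.mem_head
  have hMsub : ∀ w ∈ M0, w ∈ U := by
    intro w hw
    rw [hMt, List.mem_cons] at hw
    rcases hw with rfl | hw
    · exact huU
    · simp [hU, hC, hw]
  have hmU : m ∈ U := hMsub m hWM0.mem_last
  -- Nodup C
  have hndC : C.Nodup := by
    rw [hC, List.nodup_append]
    refine ⟨hndL, ?_, ?_⟩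
    · rw [List.nodup_cons]
      constructor
      · intro h
        rw [List.mem_reverse] at h
        exact hMni i (by rw [hMt]; exact List.mem_cons_of_mem _ h) rfl
      · exact List.nodup_reverse.mpr hndMt
    · intro w hwL w' hwR hww'
      subst hww'
      rw [List.mem_cons, List.mem_reverse] at hwR
      rcases hwR with rfl | hwMt
      · exact hLni w hwL rfl
      · have : w = u' := hshare w hwL (by rw [hMt]; exact List.mem_cons_of_mem _ hwMt)
        exact huMt (this ▸ hwMt)
  -- walks in the induced graph on U
  have hWLU : Wlk (StepIn A U) u' j L0 :=
    hWL0.mono_mem fun p q hp hq h => ⟨hLsub p hp, hLsub q hq, h.2.2⟩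
  have hWMU : Wlk (StepIn A U) u' m M0 :=
    hWM0.mono_mem fun p q hp hq h => ⟨hMsub p hp, hMsub q hq, h.2.2⟩
  have stepU : ∀ {p q : V}, StepIn A U p q → UStep A U p q := by
    intro p q h
    refine ⟨h.1, h.2.1, ?_, Or.inl h.2.2⟩
    rintro rfl
    exact hirr p h.2.2
  have hchL : List.Chain' (UStep A U) L0 := hWLU.chain'.imp fun _ _ h => stepU h
  have hchM : List.Chain' (UStep A U) M0 := hWMU.chain'.imp fun _ _ h => stepU h
  have hchMt : List.Chain' (UStep A U) Mt := by
    have := hMt ▸ hchM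
    exact this.tail
  -- the cycle
  have hiUm : UStep A U i m := ⟨hiU, hmU, him, hpair⟩
  have hcyc : IsCyc (UStep A U) C := by
    constructor
    · rw [hC]; apply List.isChain_append.mpr
      refine ⟨hchL, ?_, ?_⟩
      · rw [List.isChain_cons]
        constructor
        · intro y hy
          rw [List.head?_reverse] at hy
          cases Mt with
          | nil => simp at hy
          | cons c Mt' =>
            have hlast : M0.getLast? = some m := hWM0.getLast?_eq
            rw [hMt, List.getLast?_cons_cons] at hlast
            rw [hlast] at hy
            cases hy
            exact hiUm
        · rw [List.isChain_reverse]
          exact hchMt.imp fun p q h => uStep_symm h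
      · intro z hz y hy
        rw [hWLU.getLast?_eq] at hz
        cases hz
        cases hy
        exact ⟨hjU, hiU, hjine, Or.inl hji⟩
    · intro z hz y hy
      obtain ⟨TL, hTL⟩ := hWL0.head_eq
      have hhd : C.head? = some u' := by
        rw [hC, List.head?_append_of_ne_nil _ (by rw [hTL]; simp), hTL]
        rfl
      rw [hhd] at hy
      cases hy
      have hgl : C.getLast? = (i :: Mt.reverse).getLast? := by
        rw [hC, List.getLast?_append_of_ne_nil _ (by simp)]
      cases Mt with
      | nil =>
        rw [hgl] at hz
        simp at hz
        subst hz
        have : M0.getLast? = some m := hWM0.getLast?_eq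
        rw [hMt] at this
        simp at this
        subst this
        exact hiUm
      | cons c Mt' =>
        have : (i :: (c :: Mt').reverse).getLast? = ((c :: Mt').reverse).getLast? := by
          rw [show i :: (c :: Mt').reverse = [i] ++ (c :: Mt').reverse from rfl,
            List.getLast?_append_of_ne_nil _ (by simp)]
        rw [hgl, this, List.getLast?_reverse] at hz
        simp at hz
        subst hz
        have hfirst : UStep A U u' c := by
          have := hMt ▸ hchM
          exact (List.isChain_cons_cons.mp this).1
        exact uStep_symm hfirst
  -- cardinality
  have hcard : U.ncard ≤ x + 2 := by
    have hUeq : U = ↑C.toFinset := by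
      ext w; simp [hU]
    rw [hUeq, Set.ncard_coe_finset]
    have h1 : C.toFinset.card ≤ C.length := C.toFinset_card_le
    have h2 : C.length = L0.length + M0.length := by
      rw [hC, hMt]; simp
    have h3 : L.length ≤ a + 1 := hlL
    have h4 : M.length ≤ b + 1 := hlM
    omega
  -- the subset condition
  have hsub : ({i, j, m} : Set V) ⊆ U := by
    intro w hw
    rcases hw with rfl | rfl | rfl
    · exact hiU
    · exact hjU
    · exact hmU
  have h3le : 3 ≤ U.ncard := by
    have h3 : ({i, j, m} : Set V).ncard = 3 := by
      rw [Set.ncard_insert_of_notMem (by simp [Ne.symm hjine, him]) (Set.toFinite _),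
        Set.ncard_pair hjm]
    exact h3 ▸ Set.ncard_le_ncard hsub (Set.toFinite U)
  refine ⟨U, hsub, hcard, ?_, h3le, ?_, ?_⟩
  -- a common reachable vertex
  · rcases hpair with him' | hmi
    · refine ⟨m, hmU, ?_⟩
      intro w hw
      refine ⟨hw, ?_⟩
      have hwC : w ∈ C := hw
      rw [hC, List.mem_append, List.mem_cons, List.mem_reverse] at hwC
      rcases hwC with hwL | rfl | hwMt
      · exact ((hWLU.reach_last w hwL).tail ⟨hjU, hiU, hji⟩).tail ⟨hiU, hmU, him'⟩
      · exact Relation.ReflTransGen.single ⟨hiU, hmU, him'⟩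
      · exact hWMU.reach_last w (by rw [hMt]; exact List.mem_cons_of_mem _ hwMt)
    · refine ⟨i, hiU, ?_⟩
      intro w hw
      refine ⟨hw, ?_⟩
      have hwC : w ∈ C := hw
      rw [hC, List.mem_append, List.mem_cons, List.mem_reverse] at hwC
      rcases hwC with hwL | rfl | hwMt
      · exact (hWLU.reach_last w hwL).tail ⟨hjU, hiU, hji⟩
      · exact Relation.ReflTransGen.refl
      · exact (hWMU.reach_last w
          (by rw [hMt]; exact List.mem_cons_of_mem _ hwMt)).tail ⟨hmU, hiU, hmi⟩
  -- connectivity of U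
  · exact ⟨⟨i, hiU⟩, fun p hp q hq => chain'_connect uStep_symm hcyc.1 p hp q hq⟩
  -- connectivity after deleting any vertex
  · intro v hv
    obtain ⟨C1, C2, hCeq⟩ := List.append_of_mem (show v ∈ C from hv)
    have hnd' : (C1 ++ v :: C2).Nodup := hCeq ▸ hndC
    rw [List.nodup_append] at hnd'
    have hvC1 : v ∉ C1 := fun h => hnd'.2.2 v h v (by simp) rfl
    have hvC2 : v ∉ C2 := (List.nodup_cons.mp hnd'.2.1).1
    have hrot := isCyc_rotate (r := UStep A U) (C1 := C1) (C2 := v :: C2) (hCeq ▸ hcyc)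
    have hch2 : List.Chain' (UStep A U) (C2 ++ C1) := by
      have := hrot.1.tail
      exact (by simpa using this : List.IsChain (UStep A U) (C2 ++ C1))
    have hmemCC : ∀ p, p ∈ U → p ≠ v → p ∈ C2 ++ C1 := by
      intro p hp hpv
      have : p ∈ C1 ++ v :: C2 := hCeq ▸ (show p ∈ C from hp)
      rw [List.mem_append, List.mem_cons] at this
      rw [List.mem_append]
      tauto
    have hsubCC : ∀ p ∈ C2 ++ C1, p ≠ v := by
      intro p hp
      rw [List.mem_append] at hp
      rintro rfl
      rcases hp with h | h
      · exact hvC2 h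
      · exact hvC1 h
    have hch2' : List.Chain' (UStep A (U \ {v})) (C2 ++ C1) := by
      refine chain'_mono_mem hch2 ?_
      intro p q hp hq h
      exact ⟨⟨h.1, by simp [hsubCC p hp]⟩, ⟨h.2.1, by simp [hsubCC q hq]⟩, h.2.2⟩
    have hnonempty : ∃ w, w ∈ U ∧ w ≠ v := by
      by_cases h1 : v = i
      · exact ⟨j, hjU, fun h => hjine (h.trans h1)⟩
      · exact ⟨i, hiU, fun h => h1 h.symm⟩
    obtain ⟨w, hwU, hwv⟩ := hnonempty
    refine ⟨⟨w, hwU, by simp [hwv]⟩, ?_⟩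
    intro p hp q hq
    exact chain'_connect uStep_symm hch2' p (hmemCC p hp.1 (by simpa using hp.2))
      q (hmemCC q hq.1 (by simpa using hq.2))
end
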